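/- arXiv:1705.01527 — 13 statements merged into one kernel-verified Lean document; each statement's English description precedes it below -/
import Mathlib

section
/- Fix indices i, j with m_i + m_j ≤ d, and fix v ∈ ℂ^n. Then for every ζ ∈ ℂ with |ζ| = 1, P_{z_i w_j}(h^v(ζ), \overline{h^v(ζ)}) = (1 − ζ)^{d − m_i − m_j} · P_{z_i w_j}(v, (−ζ^{−1})^M \overline{v}). -/
open MvPolynomial ComplexConjugate

lemma eval_scale {σ : Type*} [Fintype σ] (w : σ → ℕ) (e : ℕ) (Q : MvPolynomial σ ℂ)
    (hQ : ∀ E ∈ Q.support, ∑ s, w s * E s = e) (c : ℂ) (x : σ → ℂ) :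
    eval (fun s => c ^ w s * x s) Q = c ^ e * eval x Q := by
  rw [eval_eq', eval_eq', Finset.mul_sum]
  refine Finset.sum_congr rfl fun E hE => ?_
  rw [← hQ E hE]
  simp_rw [mul_pow, ← pow_mul]
  rw [Finset.prod_mul_distrib, Finset.prod_pow_eq_pow_sum]
  ring

lemma weight_pderiv {σ : Type*} [Fintype σ] [DecidableEq σ] (w : σ → ℕ) (s : σ)
    (P : MvPolynomial σ ℂ) (e : ℕ)
    (hP : ∀ J ∈ P.support, ∑ t, w t * J t = e) :
    ∀ E ∈ (pderiv s P).support, ∑ t, w t * E t = e - w s := by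
  intro E hE
  have hrw : pderiv s P =
      ∑ J ∈ P.support, monomial (J - Finsupp.single s 1) (coeff J P * (J s : ℂ)) := by
    conv_lhs => rw [P.as_sum]
    rw [map_sum]
    simp [pderiv_monomial]
  rw [hrw] at hE
  obtain ⟨J, hJ, hEJ⟩ := Finset.mem_biUnion.mp (MvPolynomial.support_sum hE)
  rw [support_monomial] at hEJ
  split_ifs at hEJ with h0
  · simp at hEJ
  · have hJs : J s ≠ 0 := by
      intro hz; apply h0; simp [hz]
    have hEeq : E = J - Finsupp.single s 1 := Finset.mem_singleton.mp hEJ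
    have key : ∀ t, w t * J t = w t * E t + (if t = s then w t else 0) := by
      intro t
      rcases eq_or_ne t s with rfl | ht
      · obtain ⟨k, hk⟩ := Nat.exists_eq_succ_of_ne_zero hJs
        have hEt : E t = k := by
          simp [hEeq, Finsupp.sub_apply, Finsupp.single_apply, hk]
        rw [hEt, hk, if_pos rfl, Nat.mul_succ]
      · have hEt : E t = J t := by
          simp [hEeq, Finsupp.sub_apply, Finsupp.single_apply, if_neg (Ne.symm ht)]
        rw [hEt, if_neg ht, add_zero]
    have : ∑ t, w t * J t = (∑ t, w t * E t) + w s := by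
      rw [Finset.sum_congr rfl fun t _ => key t, Finset.sum_add_distrib,
        Finset.sum_ite_eq' Finset.univ s w, if_pos (Finset.mem_univ s)]
    rw [hP J hJ] at this
    omega

/-- For indices `i, j` with `m i + m j ≤ d` and `v ∈ ℂⁿ`, for every `ζ` on the
unit circle, `P_{z_i w_j}(h^v(ζ), conj (h^v(ζ))) = (1-ζ)^(d - m_i - m_j) ·
P_{z_i w_j}(v, (-ζ⁻¹)^M conj v)`. -/
theorem stmt0 (n : ℕ) (hn : 1 ≤ n) (m : Fin n → ℕ) (hm : ∀ i, 0 < m i)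
    (d k0 : ℕ) (hdk0 : d ≤ 2 * k0) (hk0d : k0 < d)
    (P : MvPolynomial (Fin n ⊕ Fin n) ℂ)
    (hP : ∀ J ∈ P.support,
      ((∑ i, m i * J (Sum.inl i)) + (∑ i, m i * J (Sum.inr i)) = d ∧
        d - k0 ≤ ∑ i, m i * J (Sum.inr i) ∧ (∑ i, m i * J (Sum.inr i)) ≤ k0))
    (i j : Fin n) (hij : m i + m j ≤ d) (v : Fin n → ℂ)
    (ζ : ℂ) (hζ : ‖ζ‖ = 1) :
    eval (Sum.elim (fun l => (1 - ζ) ^ m l * v l)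
        (fun l => (1 - conj ζ) ^ m l * conj (v l)))
        (pderiv (Sum.inl i) (pderiv (Sum.inr j) P)) =
      (1 - ζ) ^ (d - m i - m j) *
        eval (Sum.elim v (fun l => (-ζ⁻¹) ^ m l * conj (v l)))
          (pderiv (Sum.inl i) (pderiv (Sum.inr j) P)) := by
  set w : Fin n ⊕ Fin n → ℕ := Sum.elim m m with hw
  have hP' : ∀ J ∈ P.support, ∑ t, w t * J t = d := by
    intro J hJ
    rw [Fintype.sum_sum_type]
    simpa [hw] using (hP J hJ).1
  have h1 : ∀ J ∈ (pderiv (Sum.inr j) P).support, ∑ t, w t * J t = d - m j :=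
    weight_pderiv w (Sum.inr j) P d hP'
  have h2 : ∀ E ∈ (pderiv (Sum.inl i) (pderiv (Sum.inr j) P)).support,
      ∑ t, w t * E t = d - m i - m j := by
    intro E hE
    have := weight_pderiv w (Sum.inl i) _ (d - m j) h1 E hE
    have h3 : w (Sum.inl i) = m i := rfl
    rw [h3] at this
    omega
  have hζ0 : ζ ≠ 0 := by
    intro h; rw [h] at hζ; simp at hζ
  have hconj : (conj ζ : ℂ) = ζ⁻¹ := (Complex.inv_eq_conj hζ).symm
  have hpt : (Sum.elim (fun l => (1 - ζ) ^ m l * v l)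
        (fun l => (1 - conj ζ) ^ m l * conj (v l)) : Fin n ⊕ Fin n → ℂ) =
      fun t => (1 - ζ) ^ w t * (Sum.elim v (fun l => (-ζ⁻¹) ^ m l * conj (v l))) t := by
    funext t
    rcases t with l | l
    · simp [hw]
    · have : (1 : ℂ) - conj ζ = (1 - ζ) * (-ζ⁻¹) := by
        rw [hconj]
        field_simp
        ring
      simp only [Sum.elim_inr, hw, this, mul_pow]
      ring
  rw [hpt]
  exact eval_scale w (d - m i - m j) _ h2 (1 - ζ) _
end

section
/- Fix indices i, j with m_i + m_j ≤ d, and fix v ∈ ℂ^n. Then there exists a polynomial Q with complex coefficients in one variable, divisible by X^{m_j} and of degree at most 2k_0 − d + m_j, such that for every ζ ∈ ℂ with |ζ| = 1, ζ^{k_0} · P_{z_i w_j}(h^v(ζ), \overline{h^v(ζ)}) = (1 − ζ)^{d − m_i − m_j} · Q(ζ). -/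
open MvPolynomial ComplexConjugate

lemma key_alg (ζ c x y V W : ℂ) (hz : ζ ≠ 0) (a b k0 : ℕ) (hb : b ≤ k0) :
    ζ ^ k0 * (c * x * y * ((1 - ζ) ^ a * V * ((-(1 - ζ) * ζ⁻¹) ^ b * W))) =
      (1 - ζ) ^ (a + b) * (c * y * x * (-1 : ℂ) ^ b * V * W * ζ ^ (k0 - b)) := by
  have h1 : ζ ^ k0 = ζ ^ (k0 - b) * ζ ^ b := by rw [← pow_add, Nat.sub_add_cancel hb]
  have h2 : (-(1 - ζ) * ζ⁻¹) ^ b = (-1 : ℂ) ^ b * (1 - ζ) ^ b * (ζ ^ b)⁻¹ := by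
    rw [neg_eq_neg_one_mul, mul_assoc, mul_pow, mul_pow, inv_pow]; ring
  rw [h1, h2, pow_add]
  have hzb : (ζ : ℂ) ^ b ≠ 0 := pow_ne_zero _ hz
  field_simp

lemma key_sum {n : ℕ} (m : Fin n → ℕ) (i : Fin n) (g : Fin n → ℕ) (hg : 1 ≤ g i) :
    (∑ l, m l * g l) = (∑ l, m l * (g l - if i = l then 1 else 0)) + m i := by
  have h : ∀ l : Fin n, m l * g l
      = m l * (g l - if i = l then 1 else 0) + (if i = l then m l else 0) := by
    intro l
    by_cases h : i = l
    · subst h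
      rw [if_pos rfl, if_pos rfl]
      conv_lhs => rw [← Nat.sub_add_cancel hg]
      rw [Nat.mul_add, Nat.mul_one]
    · simp [h]
  rw [Finset.sum_congr rfl (fun l _ => h l), Finset.sum_add_distrib, Finset.sum_ite_eq]
  simp

lemma key {n : ℕ} (m : Fin n → ℕ) (d k0 : ℕ) (i j : Fin n) (v : Fin n → ℂ)
    (J : (Fin n ⊕ Fin n) →₀ ℕ) (c : ℂ)
    (h1 : (∑ l, m l * J (Sum.inl l)) + (∑ l, m l * J (Sum.inr l)) = d)
    (h3 : (∑ l, m l * J (Sum.inr l)) ≤ k0)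
    (ζ : ℂ) (hζ : ‖ζ‖ = 1) :
    ζ ^ k0 * eval (Sum.elim (fun l => (1 - ζ) ^ m l * v l)
        (fun l => (1 - conj ζ) ^ m l * conj (v l)))
        (pderiv (Sum.inl i) (pderiv (Sum.inr j) (monomial J c))) =
    (1 - ζ) ^ (d - m i - m j) *
      (c * (J (Sum.inl i) : ℂ) * (J (Sum.inr j) : ℂ)
          * (-1 : ℂ) ^ ((∑ l, m l * J (Sum.inr l)) - m j)
          * (∏ l, v l ^ (J (Sum.inl l) - if i = l then 1 else 0))
          * (∏ l, conj (v l) ^ (J (Sum.inr l) - if j = l then 1 else 0))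
        * ζ ^ (k0 - (∑ l, m l * J (Sum.inr l)) + m j)) := by
  have hz : ζ ≠ 0 := by
    intro h; rw [h] at hζ; simp at hζ
  have hconj : conj ζ = ζ⁻¹ := by
    have h := Complex.mul_conj ζ
    rw [Complex.normSq_eq_norm_sq, hζ, one_pow, Complex.ofReal_one] at h
    field_simp at h ⊢
    linear_combination h
  rw [pderiv_monomial, pderiv_monomial, eval_monomial]
  rcases Nat.eq_zero_or_pos (J (Sum.inl i)) with hJi | hJi
  · simp [Finsupp.tsub_apply, Finsupp.single_apply, hJi]
  rcases Nat.eq_zero_or_pos (J (Sum.inr j)) with hKj | hKj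
  · simp [hKj]
  -- main case
  have hcoeff : ((J - fun₀ | Sum.inr j => 1) (Sum.inl i) : ℂ) = (J (Sum.inl i) : ℂ) := by
    simp [Finsupp.tsub_apply, Finsupp.single_apply]
  have hexp : ∀ x : Fin n ⊕ Fin n,
      ((J - fun₀ | Sum.inr j => 1) - fun₀ | Sum.inl i => 1) x =
        J x - (if x = Sum.inr j then 1 else 0) - (if x = Sum.inl i then 1 else 0) := by
    intro x
    simp [Finsupp.tsub_apply, Finsupp.single_apply, eq_comm]
  rw [Finsupp.prod_pow, Fintype.prod_sum_type]
  simp only [Sum.elim_inl, Sum.elim_inr, hexp, hcoeff]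
  simp only [Sum.inl.injEq, Sum.inr.injEq, reduceCtorEq, if_false, Nat.sub_zero]
  have hprod1 : (∏ a₁ : Fin n, ((1 - ζ) ^ m a₁ * v a₁) ^ (J (Sum.inl a₁) - if a₁ = i then 1 else 0))
      = (1 - ζ) ^ (∑ l, m l * (J (Sum.inl l) - if i = l then 1 else 0))
        * ∏ l, v l ^ (J (Sum.inl l) - if i = l then 1 else 0) := by
    rw [← Finset.prod_pow_eq_pow_sum, ← Finset.prod_mul_distrib]
    refine Finset.prod_congr rfl fun l _ => ?_
    rw [mul_pow, ← pow_mul]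
    congr 2 <;> [skip; skip] <;> simp [eq_comm]
  have hprod2 : (∏ a₂ : Fin n, ((1 - conj ζ) ^ m a₂ * conj (v a₂)) ^ (J (Sum.inr a₂) - if a₂ = j then 1 else 0))
      = (1 - conj ζ) ^ (∑ l, m l * (J (Sum.inr l) - if j = l then 1 else 0))
        * ∏ l, conj (v l) ^ (J (Sum.inr l) - if j = l then 1 else 0) := by
    rw [← Finset.prod_pow_eq_pow_sum, ← Finset.prod_mul_distrib]
    refine Finset.prod_congr rfl fun l _ => ?_
    rw [mul_pow, ← pow_mul]
    congr 2 <;> [skip; skip] <;> simp [eq_comm]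
  rw [hprod1, hprod2]
  set a := ∑ l, m l * (J (Sum.inl l) - if i = l then 1 else 0) with ha_def
  set b := ∑ l, m l * (J (Sum.inr l) - if j = l then 1 else 0) with hb_def
  have ha : (∑ l, m l * J (Sum.inl l)) = a + m i := key_sum m i _ hJi
  have hb : (∑ l, m l * J (Sum.inr l)) = b + m j := key_sum m j _ hKj
  have e1 : d - m i - m j = a + b := by omega
  have e2 : (∑ l, m l * J (Sum.inr l)) - m j = b := by omega
  have e3 : k0 - (∑ l, m l * J (Sum.inr l)) + m j = k0 - b := by omega
  have hcz : 1 - conj ζ = -(1 - ζ) * ζ⁻¹ := by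
    rw [hconj]; field_simp; ring
  rw [e1, e2, e3, hcz]
  have hb_le : b ≤ k0 := by omega
  exact key_alg ζ c _ _ _ _ hz a b k0 hb_le


/-- there is a one-variable polynomial `Q`, divisible by `X^(m j)` and of degree
at most `2k₀ - d + m j`, with `ζ^k₀ · P_{z_i w_j}(h^v(ζ), conj (h^v(ζ)))
= (1-ζ)^(d - m_i - m_j) · Q(ζ)` on the unit circle. -/
theorem stmt1 (n : ℕ) (hn : 1 ≤ n) (m : Fin n → ℕ) (hm : ∀ i, 0 < m i)
    (d k0 : ℕ) (hdk0 : d ≤ 2 * k0) (hk0d : k0 < d)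
    (P : MvPolynomial (Fin n ⊕ Fin n) ℂ)
    (hP : ∀ J ∈ P.support,
      ((∑ i, m i * J (Sum.inl i)) + (∑ i, m i * J (Sum.inr i)) = d ∧
        d - k0 ≤ ∑ i, m i * J (Sum.inr i) ∧ (∑ i, m i * J (Sum.inr i)) ≤ k0))
    (i j : Fin n) (hij : m i + m j ≤ d) (v : Fin n → ℂ) :
    ∃ Q : Polynomial ℂ, (Polynomial.X ^ (m j) ∣ Q) ∧ Q.natDegree ≤ 2 * k0 - d + m j ∧
      ∀ ζ : ℂ, ‖ζ‖ = 1 →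
        ζ ^ k0 * eval (Sum.elim (fun l => (1 - ζ) ^ m l * v l)
            (fun l => (1 - conj ζ) ^ m l * conj (v l)))
            (pderiv (Sum.inl i) (pderiv (Sum.inr j) P)) =
          (1 - ζ) ^ (d - m i - m j) * Q.eval ζ := by
  classical
  refine ⟨∑ J ∈ P.support, Polynomial.C (coeff J P * (J (Sum.inl i) : ℂ) * (J (Sum.inr j) : ℂ)
      * (-1 : ℂ) ^ ((∑ l, m l * J (Sum.inr l)) - m j)
      * (∏ l, v l ^ (J (Sum.inl l) - if i = l then 1 else 0))
      * (∏ l, conj (v l) ^ (J (Sum.inr l) - if j = l then 1 else 0)))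
      * Polynomial.X ^ (k0 - (∑ l, m l * J (Sum.inr l)) + m j), ?_, ?_, ?_⟩
  · exact Finset.dvd_sum fun J hJ =>
      ((pow_dvd_pow Polynomial.X (Nat.le_add_left _ _)).mul_left _)
  · refine Polynomial.natDegree_sum_le_of_forall_le _ _ fun J hJ => ?_
    obtain ⟨h1, h2, h3⟩ := hP J hJ
    refine le_trans Polynomial.natDegree_mul_le ?_
    have := Polynomial.natDegree_X_pow_le (R := ℂ) (k0 - (∑ l, m l * J (Sum.inr l)) + m j)
    have hC : (Polynomial.C (coeff J P * (J (Sum.inl i) : ℂ) * (J (Sum.inr j) : ℂ)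
      * (-1 : ℂ) ^ ((∑ l, m l * J (Sum.inr l)) - m j)
      * (∏ l, v l ^ (J (Sum.inl l) - if i = l then 1 else 0))
      * (∏ l, conj (v l) ^ (J (Sum.inr l) - if j = l then 1 else 0)))).natDegree = 0 :=
      Polynomial.natDegree_C _
    omega
  · intro ζ hζ
    conv_lhs => rw [P.as_sum]
    rw [map_sum, map_sum, map_sum, Finset.mul_sum, Polynomial.eval_finset_sum, Finset.mul_sum]
    refine Finset.sum_congr rfl fun J hJ => ?_
    obtain ⟨h1, h2, h3⟩ := hP J hJ
    simp only [Polynomial.eval_mul, Polynomial.eval_C, Polynomial.eval_pow, Polynomial.eval_X]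
    exact key m d k0 i j v J _ h1 h3 ζ hζ
end

section
/- Fix indices i, j with m_i + m_j ≤ d, and fix v ∈ ℂ^n. Then there exists a polynomial S with complex coefficients in one variable, of degree at most 2k_0 − d, such that for every ζ ∈ ℂ with |ζ| = 1, ζ^{k_0} · P_{z_i z_j}(h^v(ζ), \overline{h^v(ζ)}) = (1 − ζ)^{d − m_i − m_j} · S(ζ). -/
open MvPolynomial ComplexConjugate

private lemma my_coeff_pderiv {σ : Type*} [DecidableEq σ] (a : σ) (p : MvPolynomial σ ℂ)
    (E : σ →₀ ℕ) :
    coeff E (pderiv a p) = ((E a : ℂ) + 1) * coeff (E + Finsupp.single a 1) p := by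
  induction p using MvPolynomial.induction_on' with
  | monomial s c =>
    rw [pderiv_monomial, coeff_monomial, coeff_monomial]
    by_cases h : s = E + Finsupp.single a 1
    · subst h
      rw [if_pos (add_tsub_cancel_right _ _), if_pos rfl]
      simp [Finsupp.add_apply]
      ring
    · rw [if_neg h]
      split_ifs with h2
      · by_cases hs : 1 ≤ s a
        · exfalso
          apply h
          rw [← h2, tsub_add_cancel_of_le]
          exact Finsupp.single_le_iff.mpr hs
        · have hs0 : s a = 0 := by omega
          simp [hs0]
      · ring
  | add p q hp hq => simp only [map_add, coeff_add, hp, hq]; ring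

private lemma my_support_pderiv {σ : Type*} [DecidableEq σ] (a : σ) (p : MvPolynomial σ ℂ)
    {E : σ →₀ ℕ} (hE : E ∈ (pderiv a p).support) :
    E + Finsupp.single a 1 ∈ p.support := by
  rw [mem_support_iff] at hE ⊢
  intro h
  apply hE
  rw [my_coeff_pderiv, h, mul_zero]

/-- there is a one-variable polynomial `S` of degree at most `2k₀ - d` with
`ζ^k₀ · P_{z_i z_j}(h^v(ζ), conj (h^v(ζ))) = (1-ζ)^(d - m_i - m_j) · S(ζ)` on the unit
circle. -/
theorem stmt2 (n : ℕ) (hn : 1 ≤ n) (m : Fin n → ℕ) (hm : ∀ i, 0 < m i)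
    (d k0 : ℕ) (hdk0 : d ≤ 2 * k0) (hk0d : k0 < d)
    (P : MvPolynomial (Fin n ⊕ Fin n) ℂ)
    (hP : ∀ J ∈ P.support,
      ((∑ i, m i * J (Sum.inl i)) + (∑ i, m i * J (Sum.inr i)) = d ∧
        d - k0 ≤ ∑ i, m i * J (Sum.inr i) ∧ (∑ i, m i * J (Sum.inr i)) ≤ k0))
    (i j : Fin n) (hij : m i + m j ≤ d) (v : Fin n → ℂ) :
    ∃ S : Polynomial ℂ, S.natDegree ≤ 2 * k0 - d ∧
      ∀ ζ : ℂ, ‖ζ‖ = 1 →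
        ζ ^ k0 * eval (Sum.elim (fun l => (1 - ζ) ^ m l * v l)
            (fun l => (1 - conj ζ) ^ m l * conj (v l)))
            (pderiv (Sum.inl i) (pderiv (Sum.inl j) P)) =
          (1 - ζ) ^ (d - m i - m j) * S.eval ζ := by
  classical
  set Q := pderiv (Sum.inl i) (pderiv (Sum.inl j) P) with hQ
  set A : ((Fin n ⊕ Fin n) →₀ ℕ) → ℕ := fun E => ∑ l, m l * E (Sum.inl l) with hA
  set B : ((Fin n ⊕ Fin n) →₀ ℕ) → ℕ := fun E => ∑ l, m l * E (Sum.inr l) with hB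
  -- key support facts
  have hsupp : ∀ E ∈ Q.support,
      A E + B E = d - (m i + m j) ∧ d - k0 ≤ B E ∧ B E ≤ k0 := by
    intro E hE
    set J : (Fin n ⊕ Fin n) →₀ ℕ :=
      E + Finsupp.single (Sum.inl i) 1 + Finsupp.single (Sum.inl j) 1 with hJ
    have hJP : J ∈ P.support := by
      have h1 := my_support_pderiv (Sum.inl i) (pderiv (Sum.inl j) P) hE
      exact my_support_pderiv (Sum.inl j) P h1
    obtain ⟨h1, h2, h3⟩ := hP J hJP
    have hJr : ∀ l, J (Sum.inr l) = E (Sum.inr l) := by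
      intro l
      simp [hJ, Finsupp.single_apply]
    have hBJ : (∑ l, m l * J (Sum.inr l)) = B E := by
      simp only [hB]
      exact Finset.sum_congr rfl fun l _ => by rw [hJr]
    have hAJ : (∑ l, m l * J (Sum.inl l)) = A E + m i + m j := by
      have : ∀ l, J (Sum.inl l) = E (Sum.inl l)
          + (if i = l then 1 else 0) + (if j = l then 1 else 0) := by
        intro l
        simp [hJ, Finsupp.single_apply]
      simp only [this, Nat.mul_add, Finset.sum_add_distrib, hA]
      congr 1
      · congr 1
        simp [mul_ite, Finset.sum_ite_eq]
      · simp [mul_ite, Finset.sum_ite_eq]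
    rw [hAJ, hBJ] at h1
    rw [hBJ] at h2 h3
    exact ⟨by omega, h2, h3⟩
  -- the polynomial S
  refine ⟨∑ E ∈ Q.support, Polynomial.C (coeff E Q * (-1) ^ (B E)
      * (∏ l, v l ^ E (Sum.inl l)) * (∏ l, conj (v l) ^ E (Sum.inr l)))
      * Polynomial.X ^ (k0 - B E), ?_, ?_⟩
  · apply Polynomial.natDegree_sum_le_of_forall_le
    intro E hE
    refine (Polynomial.natDegree_C_mul_X_pow_le _ _).trans ?_
    obtain ⟨h1, h2, h3⟩ := hsupp E hE
    omega
  · intro ζ hζ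
    have hζ0 : ζ ≠ 0 := by
      intro h
      rw [h] at hζ
      simp at hζ
    have hconj : conj ζ = ζ⁻¹ := (Complex.inv_eq_conj hζ).symm
    have hc : 1 - conj ζ = -(1 - ζ) * ζ⁻¹ := by
      rw [hconj]
      field_simp
      ring
    rw [eval_eq']
    rw [Finset.mul_sum, Polynomial.eval_finset_sum, Finset.mul_sum]
    apply Finset.sum_congr rfl
    intro E hE
    obtain ⟨h1, h2, h3⟩ := hsupp E hE
    rw [Fintype.prod_sum_type]
    have hL : (∏ l, (Sum.elim (fun l => (1 - ζ) ^ m l * v l)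
        (fun l => (1 - conj ζ) ^ m l * conj (v l)) (Sum.inl l)) ^ E (Sum.inl l))
        = (1 - ζ) ^ A E * ∏ l, v l ^ E (Sum.inl l) := by
      simp only [Sum.elim_inl, mul_pow, ← pow_mul]
      rw [Finset.prod_mul_distrib, Finset.prod_pow_eq_pow_sum]
    have hR : (∏ l, (Sum.elim (fun l => (1 - ζ) ^ m l * v l)
        (fun l => (1 - conj ζ) ^ m l * conj (v l)) (Sum.inr l)) ^ E (Sum.inr l))
        = (-(1 - ζ) * ζ⁻¹) ^ B E * ∏ l, conj (v l) ^ E (Sum.inr l) := by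
      simp only [Sum.elim_inr, hc, mul_pow, ← pow_mul]
      rw [Finset.prod_mul_distrib, Finset.prod_mul_distrib, Finset.prod_pow_eq_pow_sum,
        Finset.prod_pow_eq_pow_sum, ← mul_pow]
    rw [hL, hR]
    simp only [Polynomial.eval_mul, Polynomial.eval_C, Polynomial.eval_pow, Polynomial.eval_X]
    have hd : d - m i - m j = A E + B E := by omega
    have hk : ζ ^ k0 = ζ ^ (k0 - B E) * ζ ^ B E := by
      rw [← pow_add]
      congr 1
      omega
    have hB1 : ζ ^ B E * (ζ⁻¹) ^ B E = 1 := by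
      rw [← mul_pow, mul_inv_cancel₀ hζ0, one_pow]
    rw [hd, hk, pow_add, mul_pow, neg_pow]
    linear_combination (coeff E Q * (-1) ^ B E * (1 - ζ) ^ A E * (1 - ζ) ^ B E *
      (∏ l, v l ^ E (Sum.inl l)) * (∏ l, conj (v l) ^ E (Sum.inr l)) * ζ ^ (k0 - B E)) * hB1
end

section
/- Fix an index i with m_i ≤ d, and fix v ∈ ℂ^n. Then there exists a polynomial T with complex coefficients in one variable, of degree at most 2k_0 − m_i, such that for every ζ ∈ ℂ with |ζ| = 1, ζ^{k_0} · P_{z_i}(h^v(ζ), \overline{h^v(ζ)}) = T(ζ). (In particular the boundary function ζ ↦ ζ^{k_0} P_{z_i}(h^v(ζ), \overline{h^v(ζ)}) extends holomorphically to the unit disc; this is the key fact making the model disc f^v a k_0-stationary disc.) -/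
open MvPolynomial ComplexConjugate

lemma stmt3_support_pderiv {σ : Type*} [DecidableEq σ] (p : MvPolynomial σ ℂ) (i : σ)
    (J : σ →₀ ℕ) (hJ : J ∈ (pderiv i p).support) : J + Finsupp.single i 1 ∈ p.support := by
  classical
  have hc : coeff J (pderiv i p) ≠ 0 := mem_support_iff.mp hJ
  rw [← support_sum_monomial_coeff p, map_sum] at hc
  simp only [pderiv_monomial] at hc
  rw [coeff_sum] at hc
  obtain ⟨s, hs, hne⟩ := Finset.exists_ne_zero_of_sum_ne_zero hc
  rw [coeff_monomial] at hne
  split_ifs at hne with h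
  · have hsi : s i ≠ 0 := by
      intro h0; apply hne; simp [h0]
    have : s = J + Finsupp.single i 1 := by
      ext j
      by_cases hji : j = i
      · subst hji
        have := congrArg (fun f => f j) h
        simp [Finsupp.tsub_apply, Finsupp.single_apply] at this
        simp [Finsupp.add_apply, Finsupp.single_apply]
        omega
      · have := congrArg (fun f => f j) h
        simp [Finsupp.tsub_apply, Finsupp.single_apply, Ne.symm hji] at this
        simp [Finsupp.add_apply, Finsupp.single_apply, Ne.symm hji, this]
    rwa [← this]
  · exact absurd rfl hne

/-- there is a one-variable polynomial `T` of degree at most `2k₀ - m i` with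
`ζ^k₀ · P_{z_i}(h^v(ζ), conj (h^v(ζ))) = T(ζ)` on the unit circle; in particular this
boundary function extends holomorphically to the unit disc. -/
theorem stmt3 (n : ℕ) (hn : 1 ≤ n) (m : Fin n → ℕ) (hm : ∀ i, 0 < m i)
    (d k0 : ℕ) (hdk0 : d ≤ 2 * k0) (hk0d : k0 < d)
    (P : MvPolynomial (Fin n ⊕ Fin n) ℂ)
    (hP : ∀ J ∈ P.support,
      ((∑ i, m i * J (Sum.inl i)) + (∑ i, m i * J (Sum.inr i)) = d ∧
        d - k0 ≤ ∑ i, m i * J (Sum.inr i) ∧ (∑ i, m i * J (Sum.inr i)) ≤ k0))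
    (i : Fin n) (hi : m i ≤ d) (v : Fin n → ℂ) :
    ∃ T : Polynomial ℂ, T.natDegree ≤ 2 * k0 - m i ∧
      ∀ ζ : ℂ, ‖ζ‖ = 1 →
        ζ ^ k0 * eval (Sum.elim (fun l => (1 - ζ) ^ m l * v l)
            (fun l => (1 - conj ζ) ^ m l * conj (v l)))
            (pderiv (Sum.inl i) P) =
          T.eval ζ := by
  classical
  set P' := pderiv (Sum.inl i) P with hP'def
  set A : (Fin n ⊕ Fin n →₀ ℕ) → ℕ := fun J => ∑ l, m l * J (Sum.inl l) with hA
  set B : (Fin n ⊕ Fin n →₀ ℕ) → ℕ := fun J => ∑ l, m l * J (Sum.inr l) with hB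
  have key : ∀ J ∈ P'.support, A J + B J + m i = d ∧ d - k0 ≤ B J ∧ B J ≤ k0 := by
    intro J hJ
    have hmem := stmt3_support_pderiv P (Sum.inl i) J hJ
    obtain ⟨h1, h2, h3⟩ := hP _ hmem
    simp only [Finsupp.add_apply, Finsupp.single_apply, Sum.inl.injEq, reduceCtorEq,
      if_false, mul_add, mul_ite, mul_one, mul_zero, add_zero, Finset.sum_add_distrib,
      Finset.sum_ite_eq, Finset.mem_univ, if_true] at h1 h2 h3
    exact ⟨by rw [← h1]; simp only [hA, hB]; ring, h2, h3⟩
  refine ⟨∑ J ∈ P'.support,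
    Polynomial.C (P'.coeff J * (∏ l, v l ^ J (Sum.inl l)) * (∏ l, (conj (v l)) ^ J (Sum.inr l))
        * (-1) ^ (B J)) * (1 - Polynomial.X) ^ (A J + B J) * Polynomial.X ^ (k0 - B J), ?_, ?_⟩
  · apply Polynomial.natDegree_sum_le_of_forall_le
    intro J hJ
    obtain ⟨h1, h2, h3⟩ := key J hJ
    have hdeg1X : (1 - Polynomial.X : Polynomial ℂ).natDegree ≤ 1 := by
      refine le_trans (Polynomial.natDegree_sub_le _ _) ?_
      simp
    have hpow1 : ((1 - Polynomial.X : Polynomial ℂ) ^ (A J + B J)).natDegree ≤ A J + B J := by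
      refine le_trans Polynomial.natDegree_pow_le ?_
      calc (A J + B J) * (1 - Polynomial.X : Polynomial ℂ).natDegree
          ≤ (A J + B J) * 1 := Nat.mul_le_mul_left _ hdeg1X
        _ = A J + B J := mul_one _
    refine le_trans Polynomial.natDegree_mul_le ?_
    have hstep : (Polynomial.C (P'.coeff J * (∏ l, v l ^ J (Sum.inl l)) *
        (∏ l, (conj (v l)) ^ J (Sum.inr l)) * (-1) ^ (B J)) *
        (1 - Polynomial.X) ^ (A J + B J)).natDegree ≤ A J + B J := by
      refine le_trans Polynomial.natDegree_mul_le ?_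
      rw [Polynomial.natDegree_C, zero_add]
      exact hpow1
    have hX : (Polynomial.X ^ (k0 - B J) : Polynomial ℂ).natDegree ≤ k0 - B J := by simp
    have := add_le_add hstep hX
    refine le_trans this ?_
    omega
  · intro ζ hζ
    have hζ0 : ζ ≠ 0 := by
      intro h; rw [h] at hζ; simp at hζ
    have hconj : conj ζ = ζ⁻¹ := by
      refine eq_inv_of_mul_eq_one_left ?_
      rw [mul_comm, Complex.mul_conj]
      norm_cast
      rw [Complex.normSq_eq_norm_sq, hζ]
      norm_num
    have hsub : (1 - (ζ : ℂ)⁻¹) = -(1 - ζ) * ζ⁻¹ := by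
      rw [neg_sub, sub_mul, mul_inv_cancel₀ hζ0, one_mul]
    rw [eval_eq']
    rw [Polynomial.eval_finset_sum, Finset.mul_sum]
    apply Finset.sum_congr rfl
    intro J hJ
    obtain ⟨h1, h2, h3⟩ := key J hJ
    simp only [Polynomial.eval_mul, Polynomial.eval_pow, Polynomial.eval_C, Polynomial.eval_sub,
      Polynomial.eval_one, Polynomial.eval_X]
    rw [Fintype.prod_sum_type]
    simp only [Sum.elim_inl, Sum.elim_inr, hconj, hsub]
    have hprod1 : (∏ l, ((1 - ζ) ^ m l * v l) ^ J (Sum.inl l))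
        = (1 - ζ) ^ (A J) * ∏ l, v l ^ J (Sum.inl l) := by
      rw [hA]
      simp only [mul_pow, ← pow_mul]
      rw [Finset.prod_mul_distrib, Finset.prod_pow_eq_pow_sum]
    have hfact : ∀ l : Fin n, ((-(1 - ζ) * ζ⁻¹) ^ m l * conj (v l)) ^ J (Sum.inr l)
        = (-1 : ℂ) ^ (m l * J (Sum.inr l)) * (1 - ζ) ^ (m l * J (Sum.inr l)) *
          (ζ⁻¹) ^ (m l * J (Sum.inr l)) * conj (v l) ^ J (Sum.inr l) := by
      intro l
      rw [show (-(1 - ζ) * ζ⁻¹) = (-1) * (1 - ζ) * ζ⁻¹ by ring]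
      simp only [mul_pow, ← pow_mul]
    have hprod2 : (∏ l, ((-(1 - ζ) * ζ⁻¹) ^ m l * conj (v l)) ^ J (Sum.inr l))
        = (-1 : ℂ) ^ (B J) * (1 - ζ) ^ (B J) * (ζ⁻¹) ^ (B J)
          * ∏ l, conj (v l) ^ J (Sum.inr l) := by
      rw [Finset.prod_congr rfl (fun l _ => hfact l)]
      rw [hB]
      simp only [Finset.prod_mul_distrib]
      rw [Finset.prod_pow_eq_pow_sum, Finset.prod_pow_eq_pow_sum, Finset.prod_pow_eq_pow_sum]
    have hpow : ζ ^ k0 * (ζ⁻¹) ^ (B J) = ζ ^ (k0 - B J) := by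
      have hk : k0 = (k0 - B J) + B J := by omega
      rw [hk, pow_add, mul_assoc, inv_pow, mul_inv_cancel₀ (pow_ne_zero _ hζ0), mul_one,
        Nat.add_sub_cancel]
    rw [hprod1, hprod2, ← hpow, pow_add]
    ring
end

section
/- Fix v ∈ ℂ^n. If P(h^v(ζ), \overline{h^v(ζ)}) = 0 for every ζ ∈ ℂ with |ζ| = 1, then P(v, \overline{v}) = 0, where \overline{v} = (\overline{v_1},…,\overline{v_n}). -/
open MvPolynomial ComplexConjugate

lemma circle_infinite : Set.Infinite {z : ℂ | ‖z‖ = 1} := by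
  apply Set.infinite_of_injective_forall_mem (f := fun t : ℝ => (1 + t * Complex.I) / (1 - t * Complex.I))
  case hi =>
    intro t s h
    have ht : (1 : ℂ) - t * Complex.I ≠ 0 := by
      intro hc
      have := congrArg Complex.re hc
      simp [Complex.sub_re] at this
    have hs : (1 : ℂ) - s * Complex.I ≠ 0 := by
      intro hc
      have := congrArg Complex.re hc
      simp [Complex.sub_re] at this
    replace h := (div_eq_div_iff ht hs).mp h
    have h2 : (t : ℂ) = s := by
      linear_combination (-Complex.I/2) * h + ((t : ℂ) - s) * Complex.I_sq
    exact_mod_cast h2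
  case hf =>
    intro t
    have ht : (1 : ℂ) - t * Complex.I ≠ 0 := by
      intro hc
      have := congrArg Complex.re hc
      simp [Complex.sub_re] at this
    have hconj : (starRingEnd ℂ) (1 + t * Complex.I) = 1 - t * Complex.I := by
      simp [Complex.conj_I]; ring
    have hnum : (1 : ℂ) + t * Complex.I ≠ 0 := by
      intro hc
      have := congrArg Complex.re hc
      simp [Complex.add_re] at this
    show ‖_‖ = 1
    rw [norm_div, ← hconj, Complex.norm_conj, div_self (norm_ne_zero_iff.mpr hnum)]

/-- if `P(h^v(ζ), conj (h^v(ζ))) = 0` for every `ζ` on the unit circle, then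
`P(v, conj v) = 0`. -/
theorem stmt4 (n : ℕ) (hn : 1 ≤ n) (m : Fin n → ℕ) (hm : ∀ i, 0 < m i)
    (d k0 : ℕ) (hdk0 : d ≤ 2 * k0) (hk0d : k0 < d)
    (P : MvPolynomial (Fin n ⊕ Fin n) ℂ)
    (hP : ∀ J ∈ P.support,
      ((∑ i, m i * J (Sum.inl i)) + (∑ i, m i * J (Sum.inr i)) = d ∧
        d - k0 ≤ ∑ i, m i * J (Sum.inr i) ∧ (∑ i, m i * J (Sum.inr i)) ≤ k0))
    (v : Fin n → ℂ)
    (hvanish : ∀ ζ : ℂ, ‖ζ‖ = 1 →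
      eval (Sum.elim (fun l => (1 - ζ) ^ m l * v l)
        (fun l => (1 - conj ζ) ^ m l * conj (v l))) P = 0) :
    eval (Sum.elim v (fun l => conj (v l))) P = 0 := by
  classical
  set MJ : (Fin n ⊕ Fin n →₀ ℕ) → ℕ := fun J => ∑ i, m i * J (Sum.inl i) with hMJ
  set MK : (Fin n ⊕ Fin n →₀ ℕ) → ℕ := fun J => ∑ i, m i * J (Sum.inr i) with hMK
  set A : (Fin n ⊕ Fin n →₀ ℕ) → ℂ := fun J =>
    coeff J P * (∏ l, v l ^ J (Sum.inl l)) * ∏ l, conj (v l) ^ J (Sum.inr l) with hA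
  set Q : Polynomial ℂ := ∑ J ∈ P.support,
    Polynomial.C (A J) * (Polynomial.X - 1) ^ (MK J) * (1 - Polynomial.X) ^ (MJ J) *
      Polynomial.X ^ (k0 - MK J) with hQ
  have hQeval : ∀ ζ : ℂ, Q.eval ζ =
      ∑ J ∈ P.support, A J * (ζ - 1) ^ (MK J) * (1 - ζ) ^ (MJ J) * ζ ^ (k0 - MK J) := by
    intro ζ
    rw [hQ, Polynomial.eval_finset_sum]
    simp
  -- Q vanishes on the circle
  have hQcirc : ∀ ζ : ℂ, ‖ζ‖ = 1 → Q.eval ζ = 0 := by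
    intro ζ hζ
    have hζ0 : ζ ≠ 0 := by
      intro hc; rw [hc] at hζ; simp at hζ
    have hinv : (starRingEnd ℂ) ζ = ζ⁻¹ := (Complex.inv_eq_conj hζ).symm
    have key : Q.eval ζ = ζ ^ k0 * eval (Sum.elim (fun l => (1 - ζ) ^ m l * v l)
        (fun l => (1 - conj ζ) ^ m l * conj (v l))) P := by
      rw [hQeval, eval_eq', Finset.mul_sum]
      refine Finset.sum_congr rfl fun J hJ => ?_
      have hprod : ∏ i : Fin n ⊕ Fin n, (Sum.elim (fun l => (1 - ζ) ^ m l * v l)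
          (fun l => (1 - conj ζ) ^ m l * conj (v l))) i ^ J i =
          ((1 - ζ) ^ (MJ J) * ∏ l, v l ^ J (Sum.inl l)) *
          ((1 - conj ζ) ^ (MK J) * ∏ l, conj (v l) ^ J (Sum.inr l)) := by
        rw [Fintype.prod_sum_type]
        simp only [Sum.elim_inl, Sum.elim_inr, mul_pow, ← pow_mul]
        rw [Finset.prod_mul_distrib, Finset.prod_mul_distrib,
          Finset.prod_pow_eq_pow_sum, Finset.prod_pow_eq_pow_sum]
      rw [hprod]
      have hMKk0 : MK J ≤ k0 := (hP J hJ).2.2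
      have hpow : ζ ^ k0 = ζ ^ (k0 - MK J) * ζ ^ (MK J) := by
        rw [← pow_add, Nat.sub_add_cancel hMKk0]
      have hfac : ζ ^ (MK J) * (1 - conj ζ) ^ (MK J) = (ζ - 1) ^ (MK J) := by
        rw [← mul_pow, hinv]
        congr 1
        field_simp
      simp only [hA]
      rw [hpow]
      linear_combination (-(coeff J P * (∏ l, v l ^ J (Sum.inl l)) *
        (∏ l, conj (v l) ^ J (Sum.inr l)) * (1 - ζ) ^ (MJ J) * ζ ^ (k0 - MK J))) * hfac
    rw [key, hvanish ζ hζ, mul_zero]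
  -- hence Q = 0 as a polynomial
  have hQ0 : Q = 0 := by
    apply Polynomial.eq_zero_of_infinite_isRoot
    apply circle_infinite.mono
    intro z hz
    exact hQcirc z hz
  -- evaluate at -1
  have heval : Q.eval (-1) = (-1 : ℂ) ^ k0 * 2 ^ d * ∑ J ∈ P.support, A J := by
    rw [hQeval, Finset.mul_sum]
    refine Finset.sum_congr rfl fun J hJ => ?_
    have h1 : ((-1 : ℂ) - 1) = -2 := by ring
    have h2 : ((1 : ℂ) - (-1)) = 2 := by ring
    rw [h1, h2]
    have hMKk0 : MK J ≤ k0 := (hP J hJ).2.2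
    have hd : MJ J + MK J = d := (hP J hJ).1
    have hsgn : ((-1 : ℂ)) ^ (MK J) * (-1) ^ (k0 - MK J) = (-1) ^ k0 := by
      rw [← pow_add, Nat.add_sub_cancel' hMKk0]
    calc A J * (-2 : ℂ) ^ MK J * 2 ^ MJ J * (-1) ^ (k0 - MK J)
        = ((-1 : ℂ) ^ MK J * (-1) ^ (k0 - MK J)) * (2 ^ MK J * 2 ^ MJ J) * A J := by
          rw [neg_pow 2 (MK J)]; ring
      _ = (-1 : ℂ) ^ k0 * 2 ^ d * A J := by
          rw [hsgn, ← pow_add, add_comm (MK J) (MJ J), hd]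
  have hsum : ∑ J ∈ P.support, A J = 0 := by
    have h0 : (-1 : ℂ) ^ k0 * 2 ^ d * ∑ J ∈ P.support, A J = 0 := by
      rw [← heval, hQ0, Polynomial.eval_zero]
    have hne : ((-1 : ℂ) ^ k0 * 2 ^ d) ≠ 0 := by
      apply mul_ne_zero
      · exact pow_ne_zero _ (by norm_num)
      · exact pow_ne_zero _ (by norm_num)
    exact (mul_eq_zero.mp h0).resolve_left hne
  rw [eval_eq']
  rw [← hsum]
  refine Finset.sum_congr rfl fun J hJ => ?_
  rw [hA, Fintype.prod_sum_type]
  simp [mul_assoc]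
end

section
/- Let f, h : ℂ → ℂ be continuous on the closed unit disc and holomorphic on the open unit disc. If f(ζ) = ζ^{−1} · \overline{h(ζ)} for every ζ ∈ ℂ with |ζ| = 1, then f and h vanish identically on the closed unit disc. -/
open ComplexConjugate Metric Set

open scoped Real

/-- Auxiliary: a function continuous on the closed unit disc, holomorphic on the open
unit disc, vanishing on the unit circle, vanishes on the closed disc. -/
lemma maxmod_zero (g : ℂ → ℂ)
    (hgc : ContinuousOn g {ζ : ℂ | ‖ζ‖ ≤ 1})
    (hgd : DifferentiableOn ℂ g {ζ : ℂ | ‖ζ‖ < 1})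
    (hb : ∀ ζ : ℂ, ‖ζ‖ = 1 → g ζ = 0) :
    ∀ ζ : ℂ, ‖ζ‖ ≤ 1 → g ζ = 0 := by
  have hball : (Metric.ball (0 : ℂ) 1) = {ζ : ℂ | ‖ζ‖ < 1} := by
    ext z; simp
  have hcball : (Metric.closedBall (0 : ℂ) 1) = {ζ : ℂ | ‖ζ‖ ≤ 1} := by
    ext z; simp
  have hd : DiffContOnCl ℂ g (Metric.ball (0 : ℂ) 1) := by
    refine ⟨by rw [hball]; exact hgd, ?_⟩
    rw [closure_ball (0 : ℂ) one_ne_zero, hcball]; exact hgc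
  intro ζ hζ
  have hz : ζ ∈ closure (Metric.ball (0 : ℂ) 1) := by
    rw [closure_ball (0 : ℂ) one_ne_zero, hcball]; exact hζ
  have := Complex.norm_le_of_forall_mem_frontier_norm_le (isBounded_ball) hd
    (C := 0) (fun z hz => by
      rw [frontier_ball (0 : ℂ) one_ne_zero] at hz
      have : ‖z‖ = 1 := by
        simpa using hz
      simp [hb z this]) hz
  simpa using le_antisymm this (norm_nonneg _)

/-- if `f, h` are continuous on the closed unit disc, holomorphic on the open
unit disc, and `f(ζ) = ζ⁻¹ · conj (h(ζ))` on the unit circle, then `f` and `h` vanish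
identically on the closed unit disc. -/
theorem stmt5 (f h : ℂ → ℂ)
    (hfc : ContinuousOn f {ζ : ℂ | ‖ζ‖ ≤ 1})
    (hfd : DifferentiableOn ℂ f {ζ : ℂ | ‖ζ‖ < 1})
    (hhc : ContinuousOn h {ζ : ℂ | ‖ζ‖ ≤ 1})
    (hhd : DifferentiableOn ℂ h {ζ : ℂ | ‖ζ‖ < 1})
    (hbd : ∀ ζ : ℂ, ‖ζ‖ = 1 → f ζ = ζ⁻¹ * conj (h ζ)) :
    ∀ ζ : ℂ, ‖ζ‖ ≤ 1 → f ζ = 0 ∧ h ζ = 0 := by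
  have hball : (Metric.ball (0 : ℂ) 1) = {ζ : ℂ | ‖ζ‖ < 1} := by
    ext z; simp
  have hcball : (Metric.closedBall (0 : ℂ) 1) = {ζ : ℂ | ‖ζ‖ ≤ 1} := by
    ext z; simp
  -- the auxiliary function g z = z * f z * h z
  set g : ℂ → ℂ := fun z => z * f z * h z with hg
  have hgd : DiffContOnCl ℂ g (Metric.ball (0 : ℂ) 1) := by
    constructor
    · rw [hball]
      exact ((differentiable_id.differentiableOn.mul hfd).mul hhd)
    · rw [closure_ball (0 : ℂ) one_ne_zero, hcball]
      exact (continuousOn_id.mul hfc).mul hhc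
  -- Cauchy integral formula at 0
  have hcauchy := hgd.circleIntegral_sub_inv_smul (mem_ball_self one_pos) (w := 0)
  have hg0 : g 0 = 0 := by simp [hg]
  rw [hg0, smul_zero] at hcauchy
  -- the boundary values of g
  have hgb : ∀ θ : ℝ, g (circleMap 0 1 θ) =
      (Complex.normSq (h (circleMap 0 1 θ)) : ℂ) := by
    intro θ
    have habs : ‖circleMap 0 1 θ‖ = 1 := by
      simpa using norm_circleMap_zero 1 θ
    have hne : circleMap 0 1 θ ≠ 0 := by
      intro h0; rw [h0] at habs; simp at habs
    show circleMap 0 1 θ * f (circleMap 0 1 θ) * h (circleMap 0 1 θ) = _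
    rw [hbd _ habs, ← Complex.mul_conj]
    field_simp
  -- rewrite the circle integral
  have hint : (∮ z in C((0 : ℂ), 1), (z - 0)⁻¹ • g z)
      = Complex.I * ∫ θ in (0:ℝ)..(2 * π), (Complex.normSq (h (circleMap 0 1 θ)) : ℂ) := by
    rw [circleIntegral, ← intervalIntegral.integral_const_mul]
    refine intervalIntegral.integral_congr fun θ _ => ?_
    have habs : ‖circleMap 0 1 θ‖ = 1 := by
      simpa using norm_circleMap_zero 1 θ
    have hne : circleMap 0 1 θ ≠ 0 := by
      intro h0; rw [h0] at habs; simp at habs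
    rw [deriv_circleMap, smul_eq_mul, hgb θ, sub_zero]
    rw [smul_eq_mul, ← mul_assoc, mul_right_comm _ Complex.I, mul_inv_cancel₀ hne, one_mul]
  rw [hint] at hcauchy
  have hI : (Complex.I : ℂ) ≠ 0 := Complex.I_ne_zero
  have hint0 : (∫ θ in (0:ℝ)..(2 * π), (Complex.normSq (h (circleMap 0 1 θ)) : ℂ)) = 0 :=
    by exact (mul_eq_zero.1 hcauchy).resolve_left hI
  -- pass to a real integral
  set φ : ℝ → ℝ := fun θ => Complex.normSq (h (circleMap 0 1 θ)) with hφ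
  have hφc : Continuous φ := by
    refine Complex.continuous_normSq.comp ?_
    refine hhc.comp_continuous (continuous_circleMap 0 1) fun θ => ?_
    simp [norm_circleMap_zero 1 θ]
  have hreal : (∫ θ in (0:ℝ)..(2 * π), φ θ) = 0 := by
    have : (∫ θ in (0:ℝ)..(2 * π), (φ θ : ℂ)) = ((∫ θ in (0:ℝ)..(2 * π), φ θ : ℝ) : ℂ) :=
      intervalIntegral.integral_ofReal
    rw [hint0] at this
    exact_mod_cast this.symm
  -- φ vanishes on (0, 2π], hence everywhere by periodicity
  have hae : φ =ᵐ[MeasureTheory.volume.restrict (Ioc (0:ℝ) (2 * π))] 0 := by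
    refine (intervalIntegral.integral_eq_zero_iff_of_le_of_nonneg_ae
      (by positivity) ?_ (hφc.intervalIntegrable _ _)).1 hreal
    exact Filter.Eventually.of_forall fun θ => Complex.normSq_nonneg _
  have hIoc : ∀ θ ∈ Ioc (0:ℝ) (2 * π), φ θ = 0 := by
    have := MeasureTheory.Measure.eqOn_of_ae_eq hae hφc.continuousOn continuousOn_const
      (by
        rw [interior_Ioc, closure_Ioo (by positivity : (0:ℝ) ≠ 2 * π)]
        exact Ioc_subset_Icc_self)
    exact fun θ hθ => this hθ
  have hφ0 : ∀ θ : ℝ, φ θ = 0 := by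
    intro θ
    have hper : Function.Periodic φ (2 * π) := fun x => by
      simp only [hφ, periodic_circleMap 0 1 x]
    obtain ⟨y, hy, hxy⟩ := hper.exists_mem_Ioc (by positivity) θ 0
    rw [hxy]
    simpa using hIoc y (by simpa using hy)
  -- h vanishes on the circle
  have hhb : ∀ ζ : ℂ, ‖ζ‖ = 1 → h ζ = 0 := by
    intro ζ hζ
    have : ζ ∈ Metric.sphere (0 : ℂ) 1 := by
      simp [hζ]
    obtain ⟨θ, hθ⟩ : ∃ θ, circleMap 0 1 θ = ζ := by
      have hmem : ζ ∈ Set.range (circleMap 0 1) := by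
        rw [range_circleMap]; simpa using this
      exact hmem
    have := hφ0 θ
    rw [hφ] at this
    simp only [hθ] at this
    exact Complex.normSq_eq_zero.1 this
  have hh : ∀ ζ : ℂ, ‖ζ‖ ≤ 1 → h ζ = 0 := maxmod_zero h hhc hhd hhb
  have hfb : ∀ ζ : ℂ, ‖ζ‖ = 1 → f ζ = 0 := by
    intro ζ hζ
    rw [hbd ζ hζ, hhb ζ hζ]
    simp
  have hf : ∀ ζ : ℂ, ‖ζ‖ ≤ 1 → f ζ = 0 := maxmod_zero f hfc hfd hfb
  exact fun ζ hζ => ⟨hf ζ hζ, hh ζ hζ⟩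
end

section
/- Let g : ℂ → ℂ be continuous on the closed unit disc and holomorphic on the open unit disc, and let k be a natural number. If g(ζ) = ζ^k · \overline{g(ζ)} for every ζ ∈ ℂ with |ζ| = 1, then there exists a polynomial p with complex coefficients of degree at most k such that g(ζ) = p(ζ) for every ζ in the closed unit disc. -/
open ComplexConjugate

open Complex Metric Set Filter Topology NNReal

noncomputable def rtr (z : ℂ) : ℂ := ((max 1 ‖z‖ : ℝ) : ℂ)⁻¹ * z

lemma rtr_continuous : Continuous rtr := by
  apply Continuous.mul _ continuous_id
  apply Continuous.inv₀
  · exact Complex.continuous_ofReal.comp (continuous_const.max continuous_norm)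
  · intro z
    simp only [Function.comp_apply, ne_eq, Complex.ofReal_eq_zero]
    positivity

lemma rtr_abs (z : ℂ) : ‖rtr z‖ ≤ 1 := by
  have h0 : (0:ℝ) < max 1 (‖z‖) := by positivity
  have : ‖rtr z‖ = (max 1 (‖z‖))⁻¹ * ‖z‖ := by
    simp [rtr, norm_mul, norm_inv, Complex.norm_real, abs_of_pos h0]
  rw [this, inv_mul_le_iff₀ h0, mul_one]
  exact le_max_right _ _

lemma rtr_eq {z : ℂ} (h : ‖z‖ ≤ 1) : rtr z = z := by
  simp [rtr, max_eq_left h]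

lemma conj_intervalIntegral (f : ℝ → ℂ) (a b : ℝ) :
    (∫ x in a..b, (starRingEnd ℂ) (f x)) = (starRingEnd ℂ) (∫ x in a..b, f x) := by
  simp [intervalIntegral, ← integral_conj, map_sub]

/-- if `g` is continuous on the closed unit disc, holomorphic on the open unit
disc, and `g(ζ) = ζ^k · conj (g(ζ))` on the unit circle, then `g` coincides on the closed
unit disc with a polynomial of degree at most `k`. -/
theorem stmt6 (g : ℂ → ℂ) (k : ℕ)
    (hgc : ContinuousOn g {ζ : ℂ | ‖ζ‖ ≤ 1})
    (hgd : DifferentiableOn ℂ g {ζ : ℂ | ‖ζ‖ < 1})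
    (hbd : ∀ ζ : ℂ, ‖ζ‖ = 1 → g ζ = ζ ^ k * conj (g ζ)) :
    ∃ p : Polynomial ℂ, p.natDegree ≤ k ∧
      ∀ ζ : ℂ, ‖ζ‖ ≤ 1 → g ζ = p.eval ζ := by
  have hset1 : {ζ : ℂ | ‖ζ‖ ≤ 1} = closedBall (0:ℂ) 1 := by
    ext z; simp [Complex.dist_eq]
  have hset2 : {ζ : ℂ | ‖ζ‖ < 1} = ball (0:ℂ) 1 := by
    ext z; simp [Complex.dist_eq]
  rw [hset1] at hgc
  rw [hset2] at hgd
  set G : ℂ → ℂ := fun z => g (rtr z) with hGdef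
  have hGcont : Continuous G := by
    apply hgc.comp_continuous rtr_continuous
    intro z
    simp [Complex.dist_eq, rtr_abs z]
  have hGeq : ∀ z : ℂ, ‖z‖ ≤ 1 → G z = g z := by
    intro z h; simp [hGdef, rtr_eq h]
  set J : ℤ → ℝ → ℂ := fun m r =>
    ∫ θ in (0:ℝ)..(2*Real.pi), Complex.exp (m*θ*Complex.I) * G (circleMap 0 r θ) with hJdef
  have hJcont : ∀ m : ℤ, Continuous (J m) := by
    intro m
    apply intervalIntegral.continuous_parametric_intervalIntegral_of_continuous'
    show Continuous fun p : ℝ × ℝ => Complex.exp (m*p.2*Complex.I) * G (circleMap 0 p.1 p.2)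
    apply Continuous.mul
    · exact Complex.continuous_exp.comp (by continuity)
    · refine hGcont.comp ?_
      simp only [circleMap_zero]
      exact (Complex.continuous_ofReal.comp continuous_fst).mul
        (Complex.continuous_exp.comp ((Complex.continuous_ofReal.comp continuous_snd).mul
          continuous_const))
  -- interior Cauchy vanishing
  have hJzero : ∀ (n : ℕ) (r : ℝ), r ∈ Ioo (0:ℝ) 1 → J ((n:ℤ)+1) r = 0 := by
    intro n r hr
    obtain ⟨hr0, hr1⟩ := hr
    have key : (∮ z in C(0, r), z^n * g z) = 0 := by
      apply Complex.circleIntegral_eq_zero_of_differentiable_on_off_countable hr0.le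
        countable_empty
      · exact ((continuous_pow n).continuousOn).mul
          (hgc.mono (closedBall_subset_closedBall hr1.le))
      · intro z hz
        exact (differentiableAt_pow n).mul
          (hgd.differentiableAt (isOpen_ball.mem_nhds (ball_subset_ball hr1.le hz.1)))
    have hrel : (∮ z in C(0, r), z^n * g z) = (Complex.I * (r:ℂ)^(n+1)) * J ((n:ℤ)+1) r := by
      rw [hJdef]
      simp only [circleIntegral, deriv_circleMap, smul_eq_mul]
      rw [← intervalIntegral.integral_const_mul]
      apply intervalIntegral.integral_congr
      intro θ hθ
      have habs : ‖circleMap 0 r θ‖ ≤ 1 := by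
        rw [norm_circleMap_zero, abs_of_pos hr0]; exact hr1.le
      simp only
      rw [hGeq _ habs]
      simp only [circleMap_zero]
      have he : Complex.exp ((((n:ℤ):ℂ)+1) * (θ*Complex.I))
          = Complex.exp (θ*Complex.I)^(n+1) := by
        rw [← Complex.exp_nat_mul]
        push_cast
        ring_nf
      have harg : (((n:ℤ)+1 : ℤ):ℂ) * θ * Complex.I = (((n:ℤ):ℂ)+1) * (θ*Complex.I) := by
        push_cast; ring
      rw [harg, he]
      ring
    rw [hrel] at key
    have hne : (Complex.I * (r:ℂ)^(n+1)) ≠ 0 := by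
      apply mul_ne_zero Complex.I_ne_zero
      exact pow_ne_zero _ (by exact_mod_cast hr0.ne')
    exact (mul_eq_zero.mp key).resolve_left hne
  -- boundary vanishing by continuity
  have hJ1zero : ∀ n : ℕ, J ((n:ℤ)+1) 1 = 0 := by
    intro n
    have hne : (𝓝[Ioo (0:ℝ) 1] (1:ℝ)).NeBot := by
      rw [← mem_closure_iff_nhdsWithin_neBot, closure_Ioo (by norm_num : (0:ℝ) ≠ 1)]
      exact ⟨zero_le_one, le_refl 1⟩
    have h1 : Tendsto (J ((n:ℤ)+1)) (𝓝[Ioo (0:ℝ) 1] 1) (𝓝 (J ((n:ℤ)+1) 1)) :=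
      ((hJcont _).continuousAt).continuousWithinAt
    have h2 : Tendsto (J ((n:ℤ)+1)) (𝓝[Ioo (0:ℝ) 1] 1) (𝓝 0) := by
      apply Tendsto.congr' _ tendsto_const_nhds
      filter_upwards [self_mem_nhdsWithin] with r hr
      exact (hJzero n r hr).symm
    exact tendsto_nhds_unique h1 h2
  -- boundary conjugation relation
  have hconjJ : ∀ m : ℤ, J m 1 = conj (J (-(m+k)) 1) := by
    intro m
    rw [hJdef]
    simp only
    rw [← conj_intervalIntegral]
    apply intervalIntegral.integral_congr
    intro θ hθ
    simp only
    have habs : ‖circleMap 0 1 θ‖ = 1 := by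
      rw [norm_circleMap_zero]; norm_num
    have hg := hbd _ habs
    rw [hGeq _ habs.le, map_mul]
    have h2 : (starRingEnd ℂ) (Complex.exp (((-(m+k):ℤ):ℂ) * θ * Complex.I))
        = Complex.exp (((m:ℂ)+(k:ℂ)) * (θ * Complex.I)) := by
      rw [← Complex.exp_conj]
      congr 1
      push_cast
      simp only [map_mul, map_neg, map_add, Complex.conj_I, Complex.conj_ofReal,
        map_intCast, map_natCast]
      ring
    rw [h2]
    conv_lhs => rw [hg]
    have hq : circleMap 0 1 θ = Complex.exp (θ*Complex.I) := by
      rw [circleMap_zero]; simp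
    rw [hq, ← Complex.exp_nat_mul, ← mul_assoc, ← Complex.exp_add]
    congr 2
    ring
  -- power series
  have hps : ∀ r : ℝ≥0, 0 < r → (r:ℝ) < 1 →
      HasFPowerSeriesOnBall g (cauchyPowerSeries g 0 r) 0 r := by
    intro r h0 h1
    apply Complex.hasFPowerSeriesOnBall_of_differentiable_off_countable countable_empty
    · exact hgc.mono (closedBall_subset_closedBall h1.le)
    · intro z hz
      exact hgd.differentiableAt (isOpen_ball.mem_nhds (ball_subset_ball h1.le hz.1))
    · exact h0
  set c : ℕ → ℂ := fun n => (cauchyPowerSeries g 0 ((2⁻¹ : ℝ≥0) : ℝ)).coeff n with hcdef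
  have hhalf : (0:ℝ≥0) < 2⁻¹ ∧ ((2⁻¹:ℝ≥0):ℝ) < 1 := by constructor <;> norm_num
  have hunique : ∀ r : ℝ≥0, 0 < r → (r:ℝ) < 1 →
      cauchyPowerSeries g 0 r = cauchyPowerSeries g 0 ((2⁻¹ : ℝ≥0) : ℝ) :=
    fun r h0 h1 => (hps r h0 h1).hasFPowerSeriesAt.eq_formalMultilinearSeries
      (hps 2⁻¹ hhalf.1 hhalf.2).hasFPowerSeriesAt
  have hcoeff : ∀ (n : ℕ) (r : ℝ), r ∈ Ioo (0:ℝ) 1 →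
      J (-(n:ℤ)) r = 2*Real.pi * (r:ℂ)^n * c n := by
    intro n r hr
    obtain ⟨hr0, hr1⟩ := hr
    have hc : c n = (cauchyPowerSeries g 0 r).coeff n := by
      have h := congrArg (fun p : FormalMultilinearSeries ℂ ℂ ℂ => p.coeff n)
        (hunique ⟨r, hr0.le⟩ (by exact_mod_cast hr0) hr1)
      exact h.symm
    have happ : (cauchyPowerSeries g 0 r).coeff n
        = (2*(Real.pi:ℂ)*Complex.I)⁻¹ • ∮ z in C(0, r), (1/(z-0))^n • (z-0)⁻¹ • g z := by
      have := cauchyPowerSeries_apply g 0 r n 1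
      simp only [one_div] at this ⊢
      rw [FormalMultilinearSeries.coeff]
      convert this using 2
      exact rfl
    have hrel : (∮ z in C(0, r), (1/(z-0))^n • (z-0)⁻¹ • g z)
        = (Complex.I * ((r:ℂ)⁻¹)^n) * J (-(n:ℤ)) r := by
      rw [hJdef]
      simp only [circleIntegral, deriv_circleMap, smul_eq_mul, sub_zero]
      rw [← intervalIntegral.integral_const_mul]
      apply intervalIntegral.integral_congr
      intro θ hθ
      simp only
      have habs : ‖circleMap 0 r θ‖ ≤ 1 := by
        rw [norm_circleMap_zero, abs_of_pos hr0]; exact hr1.le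
      rw [hGeq _ habs]
      simp only [circleMap_zero]
      have hE : Complex.exp ((θ:ℂ)*Complex.I) ≠ 0 := Complex.exp_ne_zero _
      have hrne : (r:ℂ) ≠ 0 := by exact_mod_cast hr0.ne'
      have hexp : Complex.exp (((-(n:ℤ) : ℤ):ℂ) * θ * Complex.I)
          = (Complex.exp ((θ:ℂ)*Complex.I) ^ n)⁻¹ := by
        rw [← Complex.exp_nat_mul, ← Complex.exp_neg]
        congr 1
        push_cast
        ring
      rw [hexp]
      field_simp
      have hee : (Complex.exp ((θ:ℂ)*Complex.I))⁻¹ ^ n * Complex.exp ((θ:ℂ)*Complex.I) ^ n = 1 := by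
        rw [← mul_pow, inv_mul_cancel₀ hE, one_pow]
      linear_combination ((r:ℂ)⁻¹ ^ n * g (↑r * Complex.exp ((θ:ℂ)*Complex.I))) * hee
    rw [happ, hrel, smul_eq_mul] at hc
    rw [hc]
    have hI := Complex.I_ne_zero
    have hpi : (Real.pi:ℂ) ≠ 0 := by exact_mod_cast Real.pi_ne_zero
    have hrne : (r:ℂ) ≠ 0 := by exact_mod_cast hr0.ne'
    field_simp
    rw [mul_assoc, ← mul_pow, mul_one_div_cancel hrne, one_pow, mul_one]
  have hczero : ∀ n : ℕ, k < n → c n = 0 := by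
    intro n hn
    have h3 : J (-(n:ℤ)) 1 = 0 := by
      have h5 : -(-(n:ℤ) + k) = ((n - k - 1 : ℕ) : ℤ) + 1 := by omega
      rw [hconjJ (-(n:ℤ)), h5, hJ1zero (n-k-1), map_zero]
    have hne : (𝓝[Ioo (0:ℝ) 1] (1:ℝ)).NeBot := by
      rw [← mem_closure_iff_nhdsWithin_neBot, closure_Ioo (by norm_num : (0:ℝ) ≠ 1)]
      exact ⟨zero_le_one, le_refl 1⟩
    have h1 : Tendsto (J (-(n:ℤ))) (𝓝[Ioo (0:ℝ) 1] 1) (𝓝 (J (-(n:ℤ)) 1)) :=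
      ((hJcont _).continuousAt).continuousWithinAt
    have h2 : Tendsto (J (-(n:ℤ))) (𝓝[Ioo (0:ℝ) 1] 1) (𝓝 (2*Real.pi * c n)) := by
      have hc2 : Tendsto (fun r : ℝ => 2*Real.pi * (r:ℂ)^n * c n) (𝓝[Ioo (0:ℝ) 1] 1)
          (𝓝 (2*Real.pi * c n)) := by
        have hcont : Continuous (fun r : ℝ => 2*Real.pi * (r:ℂ)^n * c n) :=
          (continuous_const.mul (Complex.continuous_ofReal.pow n)).mul continuous_const
        have h4 : Tendsto (fun r : ℝ => 2*Real.pi * (r:ℂ)^n * c n) (𝓝[Ioo (0:ℝ) 1] 1)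
            (𝓝 ((fun r : ℝ => 2*Real.pi * (r:ℂ)^n * c n) 1)) :=
          (hcont.continuousAt).continuousWithinAt
        simpa using h4
      apply Tendsto.congr' _ hc2
      filter_upwards [self_mem_nhdsWithin] with r hr
      exact (hcoeff n r hr).symm
    have h6 : 2*Real.pi * c n = 0 := by
      rw [← tendsto_nhds_unique h1 h2, h3]
    have hpi : (2*(Real.pi:ℂ)) ≠ 0 := by
      simp [Real.pi_ne_zero]
    exact (mul_eq_zero.mp h6).resolve_left hpi
  -- the polynomial
  refine ⟨∑ n ∈ Finset.range (k+1), Polynomial.C (c n) * Polynomial.X ^ n, ?_, ?_⟩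
  · apply Polynomial.natDegree_sum_le_of_forall_le
    intro n hn
    exact le_trans (Polynomial.natDegree_C_mul_X_pow_le _ _)
      (Nat.lt_succ_iff.mp (Finset.mem_range.mp hn))
  · have hopen : ∀ ζ : ℂ, ‖ζ‖ < 1 →
        g ζ = (∑ n ∈ Finset.range (k+1), Polynomial.C (c n) * Polynomial.X ^ n).eval ζ := by
      intro ζ hζ
      set r : ℝ≥0 := ⟨(1 + ‖ζ‖)/2, by positivity⟩ with hrdef
      have h0 : (0:ℝ≥0) < r := by
        rw [← NNReal.coe_lt_coe]
        show (0:ℝ) < (1 + ‖ζ‖)/2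
        positivity
      have h1 : (r:ℝ) < 1 := by
        show (1 + ‖ζ‖)/2 < 1
        linarith
      have hmem : ζ ∈ Metric.eball (0:ℂ) r := by
        rw [Metric.emetric_ball_nnreal]
        simp only [mem_ball, Complex.dist_eq, sub_zero]
        show ‖ζ‖ < (1 + ‖ζ‖)/2
        linarith
      have hsum := (hps r h0 h1).hasSum hmem
      rw [zero_add] at hsum
      have he : (fun n => (cauchyPowerSeries g 0 (r:ℝ)) n (fun _ => ζ))
          = fun n => ζ^n • c n := by
        funext n
        rw [FormalMultilinearSeries.apply_eq_pow_smul_coeff]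
        congr 1
        rw [hcdef]
        exact congrArg (fun p : FormalMultilinearSeries ℂ ℂ ℂ => p.coeff n)
          (hunique r h0 h1)
      rw [he] at hsum
      have hfin : HasSum (fun n => ζ^n • c n)
          (∑ n ∈ Finset.range (k+1), ζ^n • c n) := by
        apply hasSum_sum_of_ne_finset_zero
        intro n hn
        have hkn : k < n := by
          by_contra h
          exact hn (Finset.mem_range.mpr (by omega))
        rw [hczero n hkn, smul_zero]
      rw [hsum.unique hfin, Polynomial.eval_finset_sum]
      apply Finset.sum_congr rfl
      intro n hn
      rw [smul_eq_mul, Polynomial.eval_mul, Polynomial.eval_C, Polynomial.eval_pow,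
        Polynomial.eval_X, mul_comm]
    intro ζ hζ
    have hcl : EqOn G (fun z => (∑ n ∈ Finset.range (k+1),
        Polynomial.C (c n) * Polynomial.X ^ n).eval z) (closedBall (0:ℂ) 1) := by
      rw [← closure_ball (0:ℂ) one_ne_zero]
      apply Set.EqOn.closure _ hGcont (Polynomial.continuous _)
      intro z hz
      have hz' : ‖z‖ < 1 := by simpa [Complex.dist_eq] using hz
      simp only
      rw [hGeq z hz'.le]
      exact hopen z hz'
    have := hcl (by simp [Complex.dist_eq, hζ] : ζ ∈ closedBall (0:ℂ) 1)
    rwa [hGeq ζ hζ] at this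
end

section
/- Let n ≥ 1, let q and s be n × n complex matrices, and let u_1, …, u_n ∈ ℂ with |u_ℓ| = 1 for every ℓ. Let A be the 2n × 2n complex matrix whose entries are: A_{2ℓ−1, 2p−1} = \overline{u_ℓ} if ℓ = p and 0 otherwise; A_{2ℓ−1, 2p} = q_{ℓp} u_ℓ + s_{ℓp} \overline{u_ℓ}; A_{2ℓ, 2p−1} = −i \overline{u_ℓ} if ℓ = p and 0 otherwise; A_{2ℓ, 2p} = i (q_{ℓp} u_ℓ − s_{ℓp} \overline{u_ℓ}). Then det A = (2i)^n · det q. -/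
open ComplexConjugate

/-- determinant identity `det A = (2i)^n · det q` for the `2n × 2n` matrix built
from `q`, `s` and unimodular numbers `u_ℓ`. Rows and columns are indexed by `Fin n × Fin 2`,
where `(ℓ, 0)` plays the role of the index `2ℓ - 1` and `(ℓ, 1)` that of `2ℓ`. -/
theorem stmt7 (n : ℕ) (hn : 1 ≤ n) (q s : Matrix (Fin n) (Fin n) ℂ)
    (u : Fin n → ℂ) (hu : ∀ l, ‖u l‖ = 1) :
    (Matrix.of fun r c : Fin n × Fin 2 =>
        if r.2 = 0 then
          (if c.2 = 0 then (if r.1 = c.1 then conj (u r.1) else 0)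
           else q r.1 c.1 * u r.1 + s r.1 c.1 * conj (u r.1))
        else
          (if c.2 = 0 then (if r.1 = c.1 then -Complex.I * conj (u r.1) else 0)
           else Complex.I * (q r.1 c.1 * u r.1 - s r.1 c.1 * conj (u r.1)))).det
      = (2 * Complex.I) ^ n * q.det := by
  classical
  let e : Fin n ⊕ Fin n ≃ Fin n × Fin 2 :=
    { toFun := Sum.elim (fun l => (l, 0)) (fun l => (l, 1))
      invFun := fun p => if p.2 = 0 then Sum.inl p.1 else Sum.inr p.1
      left_inv := by rintro (l | l) <;> simp
      right_inv := by rintro ⟨l, j⟩; fin_cases j <;> simp }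
  set D : Matrix (Fin n) (Fin n) ℂ := Matrix.diagonal fun l => conj (u l) with hD
  set M : Matrix (Fin n) (Fin n) ℂ :=
    Matrix.of fun l p => q l p * u l + s l p * conj (u l) with hM
  set C : Matrix (Fin n) (Fin n) ℂ := Matrix.diagonal fun l => -Complex.I * conj (u l) with hC
  set E : Matrix (Fin n) (Fin n) ℂ :=
    Matrix.of fun l p => Complex.I * (q l p * u l - s l p * conj (u l)) with hE
  set E' : Matrix (Fin n) (Fin n) ℂ :=
    Matrix.diagonal (fun l => 2 * Complex.I * u l) * q with hE'
  rw [← Matrix.det_submatrix_equiv_self e]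
  have hsub : (Matrix.of fun r c : Fin n × Fin 2 =>
        if r.2 = 0 then
          (if c.2 = 0 then (if r.1 = c.1 then conj (u r.1) else 0)
           else q r.1 c.1 * u r.1 + s r.1 c.1 * conj (u r.1))
        else
          (if c.2 = 0 then (if r.1 = c.1 then -Complex.I * conj (u r.1) else 0)
           else Complex.I * (q r.1 c.1 * u r.1 - s r.1 c.1 * conj (u r.1)))).submatrix e e
      = Matrix.fromBlocks D M C E := by
    ext i j
    rcases i with l | l <;> rcases j with p | p <;>
      simp [e, hD, hM, hC, hE, Matrix.diagonal, Matrix.submatrix] <;>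
      by_cases h : l = p <;> simp [h]
  rw [hsub]
  have hfac : Matrix.fromBlocks D M C E =
      Matrix.fromBlocks 1 0 ((-Complex.I) • 1) 1 * Matrix.fromBlocks D M 0 E' := by
    rw [Matrix.fromBlocks_multiply]
    have h1 : (1 : Matrix (Fin n) (Fin n) ℂ) * D + 0 * 0 = D := by simp
    have h2 : (1 : Matrix (Fin n) (Fin n) ℂ) * M + 0 * E' = M := by simp
    have h3 : (-Complex.I) • (1 : Matrix (Fin n) (Fin n) ℂ) * D + 1 * 0 = C := by
      ext l p
      simp [hC, hD, Matrix.diagonal]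
      by_cases h : l = p <;> simp [h]
    have h4 : (-Complex.I) • (1 : Matrix (Fin n) (Fin n) ℂ) * M + 1 * E' = E := by
      ext l p
      simp [hE, hM, hE', Matrix.mul_apply, Matrix.diagonal]
      ring
    rw [h1, h2, h3, h4]
  rw [hfac, Matrix.det_mul, Matrix.det_fromBlocks_zero₁₂, Matrix.det_fromBlocks_zero₂₁]
  simp only [Matrix.det_one, one_mul, mul_one]
  rw [hD, hE', Matrix.det_mul, Matrix.det_diagonal, Matrix.det_diagonal]
  rw [← mul_assoc, ← Finset.prod_mul_distrib]
  have : ∀ l : Fin n, conj (u l) * (2 * Complex.I * u l) = 2 * Complex.I := by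
    intro l
    have h1 : conj (u l) * u l = 1 := by
      have := Complex.normSq_eq_norm_sq (u l)
      rw [hu l] at this
      rw [mul_comm, Complex.mul_conj, this]
      norm_num
    calc conj (u l) * (2 * Complex.I * u l) = 2 * Complex.I * (conj (u l) * u l) := by ring
    _ = 2 * Complex.I := by rw [h1, mul_one]
  simp [this, Finset.prod_const]
end

section
/- Let n ≥ 1 and let d be an even natural number with d ≥ 2. Let P₀ = z_1^{d/2} w_1^{d/2} + ⋯ + z_n^{d/2} w_n^{d/2} (the polynomial representing |z_1|^d + ⋯ + |z_n|^d when w_i = \bar z_i), with all weights m_i = 1 and k_0 = d/2. Then for every v ∈ ℂ^n and every ζ ∈ ℂ with ζ ≠ 0, the determinant of the n × n matrix whose (i,j) entry is ζ^{k_0} · (P₀)_{z_i w_j}(v, −ζ^{−1}\overline{v}) equals (d/2)^{2n} · (−1)^{n(d/2 − 1)} · (∏_{i=1}^n |v_i|^{d−2}) · ζ^n. In particular, if all v_i ≠ 0 this function is a nonzero constant multiple of ζ^n, so its winding number on the unit circle is n. -/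
open MvPolynomial ComplexConjugate

lemma stmt8_key (n : ℕ) (k : ℕ) (i j : Fin n) :
    (pderiv (Sum.inl i) (pderiv (Sum.inr j)
      (∑ l : Fin n, X (Sum.inl l) ^ k * X (Sum.inr l) ^ k :
        MvPolynomial (Fin n ⊕ Fin n) ℂ)))
    = if i = j then (C (k:ℂ)) * X (Sum.inl i) ^ (k-1) * ((C (k:ℂ)) * X (Sum.inr i) ^ (k-1)) else 0 := by
  rcases eq_or_ne i j with rfl | h
  · simp [map_sum, pderiv_mul, pderiv_pow, pderiv_X, Pi.single_apply, Finset.sum_ite_eq,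
      mul_comm, mul_assoc, mul_left_comm]
  · simp [map_sum, pderiv_mul, pderiv_pow, pderiv_X, Pi.single_apply, Finset.sum_ite_eq, h, Ne.symm h]


/-- for the model polynomial `P₀ = ∑ z_i^(d/2) w_i^(d/2)` (weights all `1`,
`k₀ = d/2`), for every `v` and every `ζ ≠ 0`,
`det (ζ^(d/2) · (P₀)_{z_i w_j}(v, -ζ⁻¹ conj v))
  = (d/2)^(2n) · (-1)^(n(d/2 - 1)) · (∏ |v_i|^(d-2)) · ζ^n`. -/
theorem stmt8 (n : ℕ) (hn : 1 ≤ n) (d : ℕ) (hd : Even d) (hd2 : 2 ≤ d)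
    (v : Fin n → ℂ) (ζ : ℂ) (hζ : ζ ≠ 0) :
    (Matrix.of fun i j : Fin n =>
        ζ ^ (d / 2) *
          eval (Sum.elim v fun l => -ζ⁻¹ * conj (v l))
            (pderiv (Sum.inl i) (pderiv (Sum.inr j)
              (∑ l : Fin n, X (Sum.inl l) ^ (d / 2) * X (Sum.inr l) ^ (d / 2) :
                MvPolynomial (Fin n ⊕ Fin n) ℂ)))).det
      = ((d / 2 : ℕ) : ℂ) ^ (2 * n) * (-1) ^ (n * (d / 2 - 1)) *
          (∏ l, (‖v l‖ : ℂ) ^ (d - 2)) * ζ ^ n := by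
  set k := d / 2 with hk
  have hk1 : 1 ≤ k := by omega
  have hdk : d - 2 = 2 * (k - 1) := by
    obtain ⟨m, rfl⟩ := hd; omega
  have hmat : (Matrix.of fun i j : Fin n =>
        ζ ^ k *
          eval (Sum.elim v fun l => -ζ⁻¹ * conj (v l))
            (pderiv (Sum.inl i) (pderiv (Sum.inr j)
              (∑ l : Fin n, X (Sum.inl l) ^ k * X (Sum.inr l) ^ k :
                MvPolynomial (Fin n ⊕ Fin n) ℂ))))
      = Matrix.diagonal (fun i => ((k : ℂ)) ^ 2 * (-1) ^ (k - 1) *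
          (‖v i‖ : ℂ) ^ (d - 2) * ζ) := by
    ext i j
    rw [Matrix.of_apply, stmt8_key, Matrix.diagonal_apply]
    rcases eq_or_ne i j with rfl | h
    · simp only [eq_self_iff_true, if_true, eval_mul, eval_pow, eval_C, eval_X, Sum.elim_inl, Sum.elim_inr]
      have hvc : v i ^ (k - 1) * (conj (v i)) ^ (k - 1)
          = (‖v i‖ : ℂ) ^ (d - 2) := by
        rw [← mul_pow, Complex.mul_conj, Complex.normSq_eq_norm_sq, hdk, pow_mul]
        push_cast; ring
      have hz : ζ ^ k * (ζ⁻¹) ^ (k - 1) = ζ := by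
        have hzz : ζ ^ k = ζ ^ (k - 1) * ζ := by
          rw [← pow_succ]; congr 1; omega
        rw [hzz, mul_comm (ζ ^ (k-1)) ζ, mul_assoc, ← mul_pow,
          mul_inv_cancel₀ hζ, one_pow, mul_one]
      calc ζ ^ k * ((k : ℂ) * v i ^ (k - 1) * ((k : ℂ) * (-ζ⁻¹ * conj (v i)) ^ (k - 1)))
          = (k : ℂ) ^ 2 * (-1) ^ (k - 1) * (v i ^ (k-1) * (conj (v i)) ^ (k-1)) *
              (ζ ^ k * (ζ⁻¹) ^ (k - 1)) := by
            rw [neg_mul, neg_pow, mul_pow]; ring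
        _ = (k : ℂ) ^ 2 * (-1) ^ (k - 1) * (‖v i‖ : ℂ) ^ (d - 2) * ζ := by
            rw [hvc, hz]
    · simp [h]
  rw [hmat, Matrix.det_diagonal]
  rw [show (fun i => ((k : ℂ)) ^ 2 * (-1) ^ (k - 1) * (‖v i‖ : ℂ) ^ (d - 2) * ζ)
      = fun i => ((k : ℂ)) ^ 2 * (-1) ^ (k - 1) * ζ * (‖v i‖ : ℂ) ^ (d - 2) from
      funext fun i => by ring]
  rw [Finset.prod_mul_distrib, Finset.prod_const, Finset.card_fin]
  rw [mul_pow, mul_pow, ← pow_mul, ← pow_mul]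
  ring_nf
end

section
/- Let g : ℂ → ℂ be continuous on the closed unit disc and holomorphic on the open unit disc. Let N be a natural number and let c : ℤ → ℂ satisfy c_e = 0 for |e| > N and c_{−e} = \overline{c_e} for all e. If g(ζ) + \overline{g(ζ)} = 2 · Σ_{e = −N}^{N} c_e ζ^e for every ζ ∈ ℂ with |ζ| = 1 (where ζ^e denotes the integer power), then g′(0) = 2 c_1. -/
open ComplexConjugate Finset



-- core analytic lemma
lemma core_deriv_zero (h : ℂ → ℂ)
    (hc : ContinuousOn h (Metric.closedBall (0:ℂ) 1))
    (hd : DifferentiableOn ℂ h (Metric.ball (0:ℂ) 1))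
    (hre : ∀ ζ ∈ Metric.sphere (0:ℂ) 1, (h ζ).re = 0) :
    deriv h 0 = 0 := by
  have hfr : frontier (Metric.ball (0:ℂ) 1) = Metric.sphere 0 1 :=
    frontier_ball 0 one_ne_zero
  have hclos : closure (Metric.ball (0:ℂ) 1) = Metric.closedBall 0 1 :=
    closure_ball 0 one_ne_zero
  have hdcc : DiffContOnCl ℂ h (Metric.ball (0:ℂ) 1) := ⟨hd, by rwa [hclos]⟩
  have key : ∀ a : ℂ, (∀ z, (a * h z).re = (h z).re * a.re) →
      ∀ z ∈ Metric.ball (0:ℂ) 1, ((h z).re * a.re) ≤ 0 := by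
    intro a ha z hz
    have hdcc' : DiffContOnCl ℂ (fun w => Complex.exp (a * h w)) (Metric.ball (0:ℂ) 1) := by
      refine ⟨?_, ?_⟩
      · exact Complex.differentiable_exp.comp_differentiableOn
          ((hd.const_mul a))
      · rw [hclos]
        exact Complex.continuous_exp.comp_continuousOn ((hc.const_smul a).congr
          (fun x _ => by simp [smul_eq_mul]))
    have hb : ∀ w ∈ frontier (Metric.ball (0:ℂ) 1),
        ‖Complex.exp (a * h w)‖ ≤ 1 := by
      intro w hw
      rw [hfr] at hw
      rw [Complex.norm_exp, ha w, hre w hw, zero_mul,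
        Real.exp_zero]
    have := Complex.norm_le_of_forall_mem_frontier_norm_le Metric.isBounded_ball
      hdcc' hb (subset_closure hz)
    rw [Complex.norm_exp, ha z] at this
    exact (Real.exp_le_one_iff).mp this
  have h1 : ∀ z ∈ Metric.ball (0:ℂ) 1, (h z).re = 0 := by
    intro z hz
    have p1 := key 1 (fun z => by simp) z hz
    have p2 := key (-1) (fun z => by simp) z hz
    simp at p1 p2
    linarith
  -- now the derivative argument
  have h0mem : (0:ℂ) ∈ Metric.ball (0:ℂ) 1 := by simp
  have hda : DifferentiableAt ℂ h 0 :=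
    hd.differentiableAt (Metric.isOpen_ball.mem_nhds h0mem)
  set d := deriv h 0 with hdef
  have hder : HasDerivAt h d 0 := hda.hasDerivAt
  have hF : HasFDerivAt h ((ContinuousLinearMap.smulRight (1 : ℂ →L[ℂ] ℂ) d)) 0 :=
    hder.hasFDerivAt
  have hFr : HasFDerivAt (fun z => (h z).re)
      (Complex.reCLM.comp (((ContinuousLinearMap.smulRight (1 : ℂ →L[ℂ] ℂ) d)).restrictScalars ℝ)) 0 :=
    Complex.reCLM.hasFDerivAt.comp 0 (hF.restrictScalars ℝ)
  have heq : (fun z => (h z).re) =ᶠ[nhds (0:ℂ)] fun _ => (0:ℝ) := by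
    filter_upwards [Metric.isOpen_ball.mem_nhds h0mem] with z hz using h1 z hz
  have hFr0 : HasFDerivAt (fun _ : ℂ => (0:ℝ))
      (Complex.reCLM.comp (((ContinuousLinearMap.smulRight (1 : ℂ →L[ℂ] ℂ) d)).restrictScalars ℝ)) 0 :=
    hFr.congr_of_eventuallyEq heq.symm
  have hL : (Complex.reCLM.comp (((ContinuousLinearMap.smulRight (1 : ℂ →L[ℂ] ℂ) d)).restrictScalars ℝ))
      = 0 := hFr0.unique (hasFDerivAt_const 0 0)
  have e1 : d.re = 0 := by
    have := congrFun (congrArg DFunLike.coe hL) 1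
    simpa using this
  have e2 : d.im = 0 := by
    have := congrFun (congrArg DFunLike.coe hL) Complex.I
    simpa [Complex.mul_re] using this
  exact Complex.ext e1 e2


lemma bdry (N : ℕ) (c : ℤ → ℂ)
    (hc0 : ∀ e : ℤ, (N : ℤ) < |e| → c e = 0)
    (hsym : ∀ e : ℤ, c (-e) = conj (c e))
    (ζ : ℂ) (hζ : ‖ζ‖ = 1) :
    2 * ∑ e ∈ Finset.Icc (-(N : ℤ)) (N : ℤ), c e * ζ ^ e
      = (c 0 + 2 * ∑ e ∈ Finset.Icc (1:ℤ) ((N:ℤ)+1), c e * ζ ^ e.toNat)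
        + conj (c 0 + 2 * ∑ e ∈ Finset.Icc (1:ℤ) ((N:ℤ)+1), c e * ζ ^ e.toNat) := by
  set M : ℤ := (N:ℤ) + 1 with hM
  have hζ0 : ζ ≠ 0 := by
    intro h; rw [h] at hζ; simp at hζ
  have hmc : ζ * conj ζ = 1 := by
    rw [Complex.mul_conj, Complex.normSq_eq_norm_sq, hζ]; norm_num
  have hcone : conj ζ = ζ⁻¹ := eq_inv_of_mul_eq_one_left (by rwa [mul_comm] at hmc)
  -- extend sum
  have hext : ∑ e ∈ Finset.Icc (-(N : ℤ)) (N : ℤ), c e * ζ ^ e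
      = ∑ e ∈ Finset.Icc (-M) M, c e * ζ ^ e := by
    refine Finset.sum_subset (Finset.Icc_subset_Icc (by omega) (by omega)) ?_
    intro x hx hx'
    simp only [Finset.mem_Icc] at hx hx'
    have : (N:ℤ) < |x| := by
      rcases abs_cases x with ⟨h,_⟩|⟨h,_⟩ <;> omega
    rw [hc0 x this, zero_mul]
  -- split
  have s1 : Finset.Icc (-M) M = Finset.Ioc (-M-1) M := by ext x; simp
  have s2 : Finset.Icc (-M) (-1 : ℤ) = Finset.Ioc (-M-1) (-1) := by ext x; simp
  have s3 : Finset.Icc (1:ℤ) M = Finset.Ioc (0:ℤ) M := by ext x; simp; omega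
  have s4 : Finset.Ioc (-1 : ℤ) (0:ℤ) = {0} := by ext x; simp; omega
  have hsplit : ∑ e ∈ Finset.Icc (-M) M, c e * ζ ^ e
      = (∑ e ∈ Finset.Icc (-M) (-1 : ℤ), c e * ζ ^ e) + c 0
        + ∑ e ∈ Finset.Icc (1:ℤ) M, c e * ζ ^ e := by
    have hd1 : Disjoint (Finset.Ioc (-M-1) (-1:ℤ)) (Finset.Ioc (-1:ℤ) M) := by
      rw [Finset.disjoint_left]; intro x hx hx'
      simp only [Finset.mem_Ioc] at hx hx'; omega
    have hd2 : Disjoint (Finset.Ioc (-1:ℤ) (0:ℤ)) (Finset.Ioc (0:ℤ) M) := by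
      rw [Finset.disjoint_left]; intro x hx hx'
      simp only [Finset.mem_Ioc] at hx hx'; omega
    rw [s1, s2, s3,
      ← Finset.Ioc_union_Ioc_eq_Ioc (by omega : (-M-1:ℤ) ≤ -1) (by omega : (-1:ℤ) ≤ M),
      Finset.sum_union hd1,
      ← Finset.Ioc_union_Ioc_eq_Ioc (by omega : (-1:ℤ) ≤ 0) (by omega : (0:ℤ) ≤ M),
      Finset.sum_union hd2, s4]
    simp [add_assoc]
  -- negative part
  have hneg : ∑ e ∈ Finset.Icc (-M) (-1 : ℤ), c e * ζ ^ e
      = ∑ e ∈ Finset.Icc (1:ℤ) M, c (-e) * ζ ^ (-e) := by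
    refine Finset.sum_nbij' (fun e => -e) (fun e => -e) ?_ ?_ ?_ ?_ ?_
    · intro a ha; simp only [Finset.mem_Icc] at *; omega
    · intro a ha; simp only [Finset.mem_Icc] at *; omega
    · intro a _; ring
    · intro a _; ring
    · intro a _; rw [neg_neg]
  -- natural powers to integer powers
  have hnat : ∀ e ∈ Finset.Icc (1:ℤ) M, c e * ζ ^ e.toNat = c e * ζ ^ e := by
    intro e he
    simp only [Finset.mem_Icc] at he
    rw [← zpow_natCast ζ e.toNat, Int.toNat_of_nonneg (by omega)]
  -- conjugate of the polynomial part
  have hc0real : conj (c 0) = c 0 := by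
    have := hsym 0; rw [neg_zero] at this; exact this.symm
  have hconjsum : conj (∑ e ∈ Finset.Icc (1:ℤ) M, c e * ζ ^ e)
      = ∑ e ∈ Finset.Icc (1:ℤ) M, c (-e) * ζ ^ (-e) := by
    rw [map_sum]
    refine Finset.sum_congr rfl fun e he => ?_
    rw [map_mul, map_zpow₀, hcone, ← (hsym e), inv_zpow, ← zpow_neg]
  rw [hext, hsplit, hneg, Finset.sum_congr rfl hnat, map_add, map_mul, hc0real,
    hconjsum, Complex.conj_ofNat]
  ring



/-- if `g` is continuous on the closed unit disc, holomorphic on the open unit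
disc, and on the unit circle `g(ζ) + conj (g(ζ)) = 2 ∑_{e=-N}^{N} c_e ζ^e` with `c_e = 0`
for `|e| > N` and `c_{-e} = conj (c_e)`, then `g'(0) = 2 c_1`. -/
theorem stmt11 (g : ℂ → ℂ)
    (hgc : ContinuousOn g {ζ : ℂ | ‖ζ‖ ≤ 1})
    (hgd : DifferentiableOn ℂ g {ζ : ℂ | ‖ζ‖ < 1})
    (N : ℕ) (c : ℤ → ℂ)
    (hc0 : ∀ e : ℤ, (N : ℤ) < |e| → c e = 0)
    (hsym : ∀ e : ℤ, c (-e) = conj (c e))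
    (hbd : ∀ ζ : ℂ, ‖ζ‖ = 1 →
      g ζ + conj (g ζ) = 2 * ∑ e ∈ Finset.Icc (-(N : ℤ)) (N : ℤ), c e * ζ ^ e) :
    deriv g 0 = 2 * c 1 := by
  set P : ℂ → ℂ := fun z => c 0 + 2 * ∑ e ∈ Finset.Icc (1:ℤ) ((N:ℤ)+1), c e * z ^ e.toNat
    with hPdef
  -- differentiability of P
  have hPdiff : Differentiable ℂ P := by
    apply Differentiable.const_add
    apply Differentiable.const_mul
    exact Differentiable.fun_sum fun e _ => (differentiable_pow e.toNat).const_mul (c e)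
  -- derivative of P at 0
  have hPys : HasDerivAt (fun z : ℂ => ∑ e ∈ Finset.Icc (1:ℤ) ((N:ℤ)+1), c e * z ^ e.toNat)
      (c 1) 0 := by
    have : HasDerivAt (fun z : ℂ => ∑ e ∈ Finset.Icc (1:ℤ) ((N:ℤ)+1), c e * z ^ e.toNat)
        (∑ e ∈ Finset.Icc (1:ℤ) ((N:ℤ)+1), c e * (e.toNat * (0:ℂ) ^ (e.toNat - 1))) 0 :=
      HasDerivAt.fun_sum fun e _ => (hasDerivAt_pow e.toNat (0:ℂ)).const_mul (c e)
    convert this using 1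
    rw [Finset.sum_eq_single 1]
    · norm_num
    · intro b hb hb1
      simp only [Finset.mem_Icc] at hb
      have h2 : 2 ≤ b.toNat := by omega
      rw [zero_pow (by omega), mul_zero, mul_zero]
    · intro h; exact absurd (Finset.mem_Icc.mpr ⟨le_refl 1, by omega⟩) h
  have hP0 : HasDerivAt P (2 * c 1) 0 := by
    have := (hPys.const_mul (2:ℂ)).const_add (c 0)
    exact this
  -- h = g - P
  set h : ℂ → ℂ := fun z => g z - P z with hhdef
  have hsets1 : {ζ : ℂ | ‖ζ‖ ≤ 1} = Metric.closedBall (0:ℂ) 1 := by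
    ext z; simp [Complex.dist_eq]
  have hsets2 : {ζ : ℂ | ‖ζ‖ < 1} = Metric.ball (0:ℂ) 1 := by
    ext z; simp [Complex.dist_eq]
  have hhc : ContinuousOn h (Metric.closedBall (0:ℂ) 1) := by
    rw [← hsets1]; exact hgc.sub hPdiff.continuous.continuousOn
  have hhd : DifferentiableOn ℂ h (Metric.ball (0:ℂ) 1) := by
    rw [← hsets2]; exact hgd.sub hPdiff.differentiableOn
  have hre : ∀ ζ ∈ Metric.sphere (0:ℂ) 1, (h ζ).re = 0 := by
    intro ζ hζ
    have habs : ‖ζ‖ = 1 := by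
      simpa [Complex.dist_eq] using (Metric.mem_sphere.mp hζ)
    have hb := hbd ζ habs
    have hpb := bdry N c hc0 hsym ζ habs
    have : h ζ + conj (h ζ) = 0 := by
      simp only [hhdef, map_sub]
      have : g ζ + conj (g ζ) = P ζ + conj (P ζ) := by rw [hb, hpb]
      ring_nf
      ring_nf at this
      linear_combination this
    rw [Complex.add_conj] at this
    have h2 : 2 * (h ζ).re = 0 := by exact_mod_cast this
    linarith
  have hderiv0 : deriv h 0 = 0 := core_deriv_zero h hhc hhd hre
  have hgd0 : DifferentiableAt ℂ g 0 := by
    have := hhd.differentiableAt (Metric.isOpen_ball.mem_nhds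
      (show (0:ℂ) ∈ Metric.ball (0:ℂ) 1 by norm_num))
    have : DifferentiableAt ℂ (fun z => h z + P z) 0 := this.add (hPdiff 0)
    simpa [hhdef] using this
  have hg0 : HasDerivAt g (deriv g 0) 0 := hgd0.hasDerivAt
  have hh0 : HasDerivAt h (deriv g 0 - 2 * c 1) 0 := hg0.sub hP0
  have := hh0.deriv
  rw [hderiv0] at this
  linear_combination -this
end

section
/- Assume m_i + m_j ≤ d for all indices i, j, and fix v ∈ ℂ^n. Then for every ζ ∈ ℂ with |ζ| = 1, the determinant of the n × n matrix whose (i,j) entry is P_{z_i w_j}(h^v(ζ), \overline{h^v(ζ)}) equals (1 − ζ)^{nd − 2(m_1 + ⋯ + m_n)} times the determinant of the n × n matrix whose (i,j) entry is P_{z_i w_j}(v, (−ζ^{−1})^M \overline{v}). -/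
open MvPolynomial ComplexConjugate


lemma aux_pderiv_support {σ : Type*} [Fintype σ] [DecidableEq σ] (w : σ → ℕ) (e : ℕ) (s : σ)
    (P : MvPolynomial σ ℂ) (hP : ∀ J ∈ P.support, ∑ i, w i * J i = e) :
    ∀ K ∈ (pderiv s P).support, ∑ i, w i * K i = e - w s := by
  intro K hK
  rw [MvPolynomial.mem_support_iff] at hK
  have hrw : pderiv s P = ∑ J ∈ P.support, monomial (J - Finsupp.single s 1) (coeff J P * J s) := by
    conv_lhs => rw [P.as_sum]
    rw [map_sum]
    exact Finset.sum_congr rfl fun J _ => pderiv_monomial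
  rw [hrw] at hK
  simp only [MvPolynomial.coeff_sum, coeff_monomial] at hK
  obtain ⟨J, hJ, hne⟩ := Finset.exists_ne_zero_of_sum_ne_zero hK
  have hKJ : J - Finsupp.single s 1 = K := by
    by_contra h; simp [h] at hne
  have hJs : J s ≠ 0 := by
    intro h; rw [hKJ] at hne; simp [h] at hne
  have hKi : ∀ i, K i = J i - (Finsupp.single s 1 : σ →₀ ℕ) i := by
    intro i; rw [← hKJ]; simp [Finsupp.tsub_apply]
  have key : ∀ i, w i * J i = w i * K i + (if i = s then w s else 0) := by
    intro i
    rcases eq_or_ne i s with rfl | h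
    · have h1 : J i = K i + 1 := by
        have := hKi i
        simp only [Finsupp.single_eq_same] at this
        omega
      simp [h1, Nat.mul_succ]
    · simp [hKi i, Finsupp.single_eq_of_ne (Ne.symm h), h]
  have := hP J hJ
  rw [Finset.sum_congr rfl (fun i _ => key i), Finset.sum_add_distrib,
    Finset.sum_ite_eq' Finset.univ s (fun _ => w s)] at this
  simp at this
  omega

lemma aux_eval_scale {σ : Type*} [Fintype σ] (w : σ → ℕ) (e : ℕ)
    (P : MvPolynomial σ ℂ) (hP : ∀ J ∈ P.support, ∑ i, w i * J i = e) (lam : ℂ) (x : σ → ℂ) :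
    eval (fun s => lam ^ w s * x s) P = lam ^ e * eval x P := by
  rw [eval_eq', eval_eq', Finset.mul_sum]
  refine Finset.sum_congr rfl fun J hJ => ?_
  have : ∀ i : σ, (lam ^ w i * x i) ^ J i = lam ^ (w i * J i) * x i ^ J i := by
    intro i; rw [mul_pow, ← pow_mul]
  rw [Finset.prod_congr rfl (fun i _ => this i), Finset.prod_mul_distrib,
    Finset.prod_pow_eq_pow_sum, hP J hJ]
  ring

/-- assuming `m i + m j ≤ d` for all `i, j`, for every `ζ` on the unit circle
the Levi determinant `det (P_{z_i w_j}(h^v(ζ), conj (h^v(ζ))))` equals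
`(1-ζ)^(nd - 2(m_1 + ⋯ + m_n))` times `det (P_{z_i w_j}(v, (-ζ⁻¹)^M conj v))`. -/
theorem stmt13 (n : ℕ) (hn : 1 ≤ n) (m : Fin n → ℕ) (hm : ∀ i, 0 < m i)
    (d k0 : ℕ) (hdk0 : d ≤ 2 * k0) (hk0d : k0 < d)
    (P : MvPolynomial (Fin n ⊕ Fin n) ℂ)
    (hP : ∀ J ∈ P.support,
      ((∑ i, m i * J (Sum.inl i)) + (∑ i, m i * J (Sum.inr i)) = d ∧
        d - k0 ≤ ∑ i, m i * J (Sum.inr i) ∧ (∑ i, m i * J (Sum.inr i)) ≤ k0))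
    (hmd : ∀ i j : Fin n, m i + m j ≤ d) (v : Fin n → ℂ)
    (ζ : ℂ) (hζ : ‖ζ‖ = 1) :
    (Matrix.of fun i j : Fin n =>
        eval (Sum.elim (fun l => (1 - ζ) ^ m l * v l)
            (fun l => (1 - conj ζ) ^ m l * conj (v l)))
          (pderiv (Sum.inl i) (pderiv (Sum.inr j) P))).det
      = (1 - ζ) ^ (n * d - 2 * ∑ i, m i) *
          (Matrix.of fun i j : Fin n =>
            eval (Sum.elim v (fun l => (-ζ⁻¹) ^ m l * conj (v l)))
              (pderiv (Sum.inl i) (pderiv (Sum.inr j) P))).det := by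
  have hζ0 : ζ ≠ 0 := by
    intro h; rw [h] at hζ; simp at hζ
  have hconj : conj ζ = ζ⁻¹ := by
    have h1 : ζ * conj ζ = 1 := by
      rw [Complex.mul_conj]
      norm_cast
      rw [Complex.normSq_eq_norm_sq, hζ]; norm_num
    exact eq_inv_of_mul_eq_one_left (by rw [mul_comm]; exact h1)
  set lam : ℂ := 1 - ζ with hlam
  have hfac : 1 - conj ζ = lam * (-ζ⁻¹) := by
    rw [hconj]; field_simp; ring
  set w : Fin n ⊕ Fin n → ℕ := Sum.elim m m with hw
  set u : Fin n → ℂ := fun l => (-ζ⁻¹) ^ m l * conj (v l) with hu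
  -- homogeneity of P in sum-type form
  have hPw : ∀ J ∈ P.support, ∑ s, w s * J s = d := by
    intro J hJ
    rw [Fintype.sum_sum_type]
    exact (hP J hJ).1
  -- the evaluation point on the left rewrites as a weighted scaling
  have hpt : (Sum.elim (fun l => lam ^ m l * v l)
      (fun l => (1 - conj ζ) ^ m l * conj (v l)) : Fin n ⊕ Fin n → ℂ)
      = fun s => lam ^ w s * (Sum.elim v u) s := by
    funext s
    cases s with
    | inl l => simp [hw]
    | inr l => simp only [Sum.elim_inr, hfac, hw, hu, mul_pow]; ring
  -- entrywise identity
  have hentry : ∀ i j : Fin n,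
      eval (Sum.elim (fun l => lam ^ m l * v l)
          (fun l => (1 - conj ζ) ^ m l * conj (v l)))
        (pderiv (Sum.inl i) (pderiv (Sum.inr j) P))
      = lam ^ (d - m j - m i) *
        eval (Sum.elim v u) (pderiv (Sum.inl i) (pderiv (Sum.inr j) P)) := by
    intro i j
    have h1 := aux_pderiv_support w d (Sum.inr j) P hPw
    have h2 := aux_pderiv_support w (d - w (Sum.inr j)) (Sum.inl i) _ h1
    rw [hpt]
    have := aux_eval_scale w (d - w (Sum.inr j) - w (Sum.inl i))
      (pderiv (Sum.inl i) (pderiv (Sum.inr j) P)) h2 lam (Sum.elim v u)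
    rw [this]
    simp [hw]
  rw [Matrix.det_apply, Matrix.det_apply, Finset.mul_sum]
  refine Finset.sum_congr rfl fun σ _ => ?_
  have hprod : ∏ i, (Matrix.of fun i j : Fin n =>
      eval (Sum.elim (fun l => lam ^ m l * v l)
          (fun l => (1 - conj ζ) ^ m l * conj (v l)))
        (pderiv (Sum.inl i) (pderiv (Sum.inr j) P))) (σ i) i
      = lam ^ (n * d - 2 * ∑ i, m i) *
        ∏ i, (Matrix.of fun i j : Fin n =>
          eval (Sum.elim v u) (pderiv (Sum.inl (i : Fin n)) (pderiv (Sum.inr j) P))) (σ i) i := by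
    have : ∀ i : Fin n, (Matrix.of fun i j : Fin n =>
        eval (Sum.elim (fun l => lam ^ m l * v l)
            (fun l => (1 - conj ζ) ^ m l * conj (v l)))
          (pderiv (Sum.inl i) (pderiv (Sum.inr j) P))) (σ i) i
        = lam ^ (d - m i - m (σ i)) *
          (Matrix.of fun i j : Fin n =>
            eval (Sum.elim v u) (pderiv (Sum.inl (i : Fin n)) (pderiv (Sum.inr j) P))) (σ i) i := by
      intro i
      simp only [Matrix.of_apply]
      rw [hentry (σ i) i]
    rw [Finset.prod_congr rfl fun i _ => this i, Finset.prod_mul_distrib,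
      Finset.prod_pow_eq_pow_sum]
    congr 2
    have hsum : ∑ i, (d - m i - m (σ i)) + ∑ i, (m i + m (σ i)) = n * d := by
      rw [← Finset.sum_add_distrib]
      have : ∀ i : Fin n, d - m i - m (σ i) + (m i + m (σ i)) = d := by
        intro i; have := hmd i (σ i); omega
      rw [Finset.sum_congr rfl fun i _ => this i]
      simp [mul_comm]
    have hsum2 : ∑ i, (m i + m (σ i)) = 2 * ∑ i, m i := by
      rw [Finset.sum_add_distrib, Equiv.sum_comp σ m]; ring
    omega
  rw [hprod, mul_smul_comm]
end

section
/- Assume m_i + m_j ≤ d for all indices i, j, and fix v ∈ ℂ^n. Then for every ζ ∈ ℂ with |ζ| = 1 and ζ ≠ 1, the determinant of the n × n matrix whose (i,j) entry is ζ^{k_0} · P_{z_i w_j}(v, (−ζ^{−1})^M \overline{v}) vanishes if and only if the determinant of the n × n matrix whose (i,j) entry is P_{z_i w_j}(h^v(ζ), \overline{h^v(ζ)}) vanishes. That is, away from ζ = 1 the zeros on the unit circle of the function Q^v are exactly the points where the disc h^v passes through Levi-degenerate points of the model hypersurface. -/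
open MvPolynomial ComplexConjugate

private lemma eval_scale_aux {σ : Type*} (w : σ → ℕ) (N : ℕ)
    (Q : MvPolynomial σ ℂ) (hQ : Q.IsWeightedHomogeneous w N)
    (u : ℂ) (e : σ → ℂ) :
    eval (fun s => u ^ w s * e s) Q = u ^ N * eval e Q := by
  rw [eval_eq, eval_eq, Finset.mul_sum]
  refine Finset.sum_congr rfl fun J hJ => ?_
  have hw : Finsupp.weight w J = N := hQ (mem_support_iff.mp hJ)
  calc coeff J Q * ∏ i ∈ J.support, (u ^ w i * e i) ^ J i
      = coeff J Q * ((∏ i ∈ J.support, u ^ (w i * J i)) * ∏ i ∈ J.support, e i ^ J i) := by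
        rw [← Finset.prod_mul_distrib]
        simp [mul_pow, pow_mul]
    _ = u ^ N * (coeff J Q * ∏ i ∈ J.support, e i ^ J i) := by
        rw [Finset.prod_pow_eq_pow_sum]
        have hN : ∑ i ∈ J.support, w i * J i = N := by
          rw [← hw, Finsupp.weight_apply, Finsupp.sum]
          exact Finset.sum_congr rfl fun i _ => by rw [smul_eq_mul, mul_comm]
        rw [hN]; ring

private lemma pderiv_isWeightedHomogeneous_aux {σ : Type*} [DecidableEq σ] (w : σ → ℕ) (x : σ)
    (N : ℕ) (Q : MvPolynomial σ ℂ) (hQ : Q.IsWeightedHomogeneous w N) :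
    (pderiv x Q).IsWeightedHomogeneous w (N - w x) := by
  have hsum : pderiv x Q = ∑ J ∈ Q.support, pderiv x (monomial J (coeff J Q)) := by
    rw [← map_sum, ← Q.as_sum]
  rw [hsum, ← mem_weightedHomogeneousSubmodule]
  apply Submodule.sum_mem
  intro J hJ
  rw [pderiv_monomial, mem_weightedHomogeneousSubmodule]
  by_cases h : J x = 0
  · rw [h]
    simp only [Nat.cast_zero, mul_zero, map_zero]
    exact isWeightedHomogeneous_zero ℂ w _
  · apply isWeightedHomogeneous_monomial
    have hw : Finsupp.weight w J = N := hQ (mem_support_iff.mp hJ)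
    have h1 : J = (J - Finsupp.single x 1) + Finsupp.single x 1 := by
      ext s
      by_cases hs : s = x
      · subst hs
        simp only [Finsupp.add_apply, Finsupp.tsub_apply, Finsupp.single_eq_same]
        omega
      · simp [Finsupp.single_apply, Ne.symm hs]
    have h2 := congrArg (Finsupp.weight w) h1
    rw [map_add] at h2
    have hsx : Finsupp.weight w (Finsupp.single x 1) = w x := by
      rw [Finsupp.weight_apply, Finsupp.sum_single_index] <;> simp
    rw [hsx] at h2
    omega

/-- assuming `m i + m j ≤ d` for all `i, j`, for every `ζ ≠ 1` on the unit
circle, `det (ζ^k₀ · P_{z_i w_j}(v, (-ζ⁻¹)^M conj v)) = 0` if and only if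
`det (P_{z_i w_j}(h^v(ζ), conj (h^v(ζ)))) = 0`. -/
theorem stmt14 (n : ℕ) (hn : 1 ≤ n) (m : Fin n → ℕ) (hm : ∀ i, 0 < m i)
    (d k0 : ℕ) (hdk0 : d ≤ 2 * k0) (hk0d : k0 < d)
    (P : MvPolynomial (Fin n ⊕ Fin n) ℂ)
    (hP : ∀ J ∈ P.support,
      ((∑ i, m i * J (Sum.inl i)) + (∑ i, m i * J (Sum.inr i)) = d ∧
        d - k0 ≤ ∑ i, m i * J (Sum.inr i) ∧ (∑ i, m i * J (Sum.inr i)) ≤ k0))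
    (hmd : ∀ i j : Fin n, m i + m j ≤ d) (v : Fin n → ℂ)
    (ζ : ℂ) (hζ : ‖ζ‖ = 1) (hζ1 : ζ ≠ 1) :
    (Matrix.of fun i j : Fin n =>
        ζ ^ k0 * eval (Sum.elim v (fun l => (-ζ⁻¹) ^ m l * conj (v l)))
          (pderiv (Sum.inl i) (pderiv (Sum.inr j) P))).det = 0 ↔
      (Matrix.of fun i j : Fin n =>
          eval (Sum.elim (fun l => (1 - ζ) ^ m l * v l)
              (fun l => (1 - conj ζ) ^ m l * conj (v l)))
            (pderiv (Sum.inl i) (pderiv (Sum.inr j) P))).det = 0 := by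
  classical
  set w : (Fin n ⊕ Fin n) → ℕ := Sum.elim m m with hw_def
  have hζ0 : ζ ≠ 0 := by
    intro h; rw [h] at hζ; simp at hζ
  have hu : (1 : ℂ) - ζ ≠ 0 := sub_ne_zero.mpr (Ne.symm hζ1)
  have hmulconj : ζ * conj ζ = 1 := by
    rw [Complex.mul_conj, Complex.normSq_eq_norm_sq, hζ]; norm_num
  have hconj : conj ζ = ζ⁻¹ := eq_inv_of_mul_eq_one_left (by rw [mul_comm]; exact hmulconj)
  -- P is weighted homogeneous of degree d
  have hPH : P.IsWeightedHomogeneous w d := by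
    intro J hJ
    have hd := (hP J (mem_support_iff.mpr hJ)).1
    rw [Finsupp.weight_apply, Finsupp.sum_fintype _ _ (fun i => by simp)]
    rw [Fintype.sum_sum_type]
    simp only [smul_eq_mul, hw_def, Sum.elim_inl, Sum.elim_inr]
    rw [← hd]
    congr 1 <;> exact Finset.sum_congr rfl fun i _ => mul_comm _ _
  have hQ : ∀ i j : Fin n, (pderiv (Sum.inl i) (pderiv (Sum.inr j) P)).IsWeightedHomogeneous
      w (d - m j - m i) := by
    intro i j
    have h1 := pderiv_isWeightedHomogeneous_aux w (Sum.inr j) d P hPH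
    have h2 := pderiv_isWeightedHomogeneous_aux w (Sum.inl i) _ _ h1
    simpa [hw_def] using h2
  set e0 : (Fin n ⊕ Fin n) → ℂ := Sum.elim v (fun l => (-ζ⁻¹) ^ m l * conj (v l)) with he0
  set A : Matrix (Fin n) (Fin n) ℂ :=
    Matrix.of fun i j => eval e0 (pderiv (Sum.inl i) (pderiv (Sum.inr j) P)) with hA
  -- key scaling identity for the second matrix's entries
  have key : ∀ i j : Fin n,
      eval (Sum.elim (fun l => (1 - ζ) ^ m l * v l)
          (fun l => (1 - conj ζ) ^ m l * conj (v l)))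
        (pderiv (Sum.inl i) (pderiv (Sum.inr j) P))
      = (1 - ζ) ^ (d - m j - m i) * A i j := by
    intro i j
    have hscale := eval_scale_aux w (d - m j - m i) _ (hQ i j) (1 - ζ) e0
    have hpt : (Sum.elim (fun l => (1 - ζ) ^ m l * v l)
        (fun l => (1 - conj ζ) ^ m l * conj (v l)) : (Fin n ⊕ Fin n) → ℂ)
        = fun s => (1 - ζ) ^ w s * e0 s := by
      funext s
      cases s with
      | inl l => simp [hw_def, he0]
      | inr l =>
        simp only [hw_def, he0, Sum.elim_inl, Sum.elim_inr]
        rw [hconj, ← mul_assoc, ← mul_pow]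
        congr 2
        field_simp
        ring
    rw [hpt]
    simpa [hA] using hscale
  -- factor the exponents
  set f : Fin n → ℂ := fun i => (1 - ζ) ^ d * ((1 - ζ) ^ m i)⁻¹ with hf
  set g : Fin n → ℂ := fun j => ((1 - ζ) ^ m j)⁻¹ with hg
  have hexp : ∀ i j : Fin n, (1 - ζ) ^ (d - m j - m i) = f i * g j := by
    intro i j
    have hle := hmd i j
    have h3 : (1 - ζ) ^ (d - m j - m i) = (1 - ζ) ^ d / (1 - ζ) ^ (m i + m j) := by
      rw [eq_div_iff (pow_ne_zero _ hu), ← pow_add]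
      congr 1
      omega
    rw [h3, hf, hg, pow_add]
    field_simp
  have hf0 : ∀ i, f i ≠ 0 := fun i =>
    mul_ne_zero (pow_ne_zero _ hu) (inv_ne_zero (pow_ne_zero _ hu))
  have hg0 : ∀ j, g j ≠ 0 := fun j => inv_ne_zero (pow_ne_zero _ hu)
  -- first determinant
  have hdet1 : (Matrix.of fun i j : Fin n =>
      ζ ^ k0 * eval e0 (pderiv (Sum.inl i) (pderiv (Sum.inr j) P))).det
      = (ζ ^ k0) ^ n * A.det := by
    have : (Matrix.of fun i j : Fin n =>
        ζ ^ k0 * eval e0 (pderiv (Sum.inl i) (pderiv (Sum.inr j) P))) = (ζ ^ k0) • A := by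
      ext i j; simp [hA, Matrix.smul_apply]
    rw [this, Matrix.det_smul]
    simp
  -- second determinant
  have hdet2 : (Matrix.of fun i j : Fin n =>
      eval (Sum.elim (fun l => (1 - ζ) ^ m l * v l)
          (fun l => (1 - conj ζ) ^ m l * conj (v l)))
        (pderiv (Sum.inl i) (pderiv (Sum.inr j) P))).det
      = (∏ i, f i) * ((∏ j, g j) * A.det) := by
    have hB : (Matrix.of fun i j : Fin n =>
        eval (Sum.elim (fun l => (1 - ζ) ^ m l * v l)
            (fun l => (1 - conj ζ) ^ m l * conj (v l)))
          (pderiv (Sum.inl i) (pderiv (Sum.inr j) P)))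
        = Matrix.of fun i j => f i * ((Matrix.of fun i j => g j * A i j) i j) := by
      ext i j
      rw [Matrix.of_apply, key i j, hexp i j, Matrix.of_apply, Matrix.of_apply]
      ring
    rw [hB, Matrix.det_mul_column, Matrix.det_mul_row]
  rw [hdet1, hdet2]
  constructor
  · intro h
    rcases mul_eq_zero.mp h with h | h
    · exact absurd h (pow_ne_zero _ (pow_ne_zero _ hζ0))
    · rw [h]; ring
  · intro h
    rcases mul_eq_zero.mp h with h | h
    · exact absurd h (Finset.prod_ne_zero_iff.mpr fun i _ => hf0 i)
    rcases mul_eq_zero.mp h with h | h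
    · exact absurd h (Finset.prod_ne_zero_iff.mpr fun j _ => hg0 j)
    · rw [h]; ring
end

section
/- Write P = Σ_{j = d−k_0}^{k_0} P_j, where every monomial z^J w^K occurring in P_j satisfies M·J = j and M·K = d − j. Fix v ∈ ℂ^n, and let g : ℂ → ℂ be continuous on the closed unit disc, holomorphic on the open unit disc, and satisfy g(ζ) + \overline{g(ζ)} = 2 · P(h^v(ζ), \overline{h^v(ζ)}) for every ζ ∈ ℂ with |ζ| = 1. Then g′(0) = −2 · Σ_{j = d−k_0}^{k_0} (Σ_{ℓ ≥ 0} C(j, ℓ + 1) · C(d − j, ℓ)) · P_j(v, \overline{v}), where C(·,·) denotes the binomial coefficient and \overline{v} = (\overline{v_1},…,\overline{v_n}). -/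
open MvPolynomial ComplexConjugate Finset

set_option maxRecDepth 8000
set_option maxHeartbeats 1000000

open MvPolynomial ComplexConjugate Finset

section Aux

private lemma eval_bihom {n : ℕ} (m : Fin n → ℕ) (d j : ℕ)
    (Q : MvPolynomial (Fin n ⊕ Fin n) ℂ)
    (hQ : ∀ J ∈ Q.support, (∑ i, m i * J (Sum.inl i)) = j ∧ (∑ i, m i * J (Sum.inr i)) = d - j)
    (v : Fin n → ℂ) (z w : ℂ) :
    eval (Sum.elim (fun l => z ^ m l * v l) (fun l => w ^ m l * conj (v l))) Q
      = z ^ j * w ^ (d - j) * eval (Sum.elim v fun l => conj (v l)) Q := by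
  rw [eval_eq', eval_eq', Finset.mul_sum]
  refine Finset.sum_congr rfl fun J hJ => ?_
  obtain ⟨h1, h2⟩ := hQ J hJ
  rw [Fintype.prod_sum_type, Fintype.prod_sum_type]
  simp only [Sum.elim_inl, Sum.elim_inr, mul_pow]
  rw [Finset.prod_mul_distrib, Finset.prod_mul_distrib]
  simp only [← pow_mul]
  rw [Finset.prod_pow_eq_pow_sum, Finset.prod_pow_eq_pow_sum, h1, h2]
  ring

private lemma choose_sum (d j : ℕ) (hj1 : 1 ≤ j) (hjd : j ≤ d) :
    (∑ l ∈ Finset.range (d + 1), j.choose (l + 1) * (d - j).choose l) = d.choose (d + 1 - j) := by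
  have key := Nat.add_choose_eq j (d - j) (d + 1 - j)
  rw [Finset.Nat.sum_antidiagonal_eq_sum_range_succ_mk, show j + (d - j) = d by omega] at key
  have expand :
      ∑ k ∈ Finset.range (d + 1 - j + 1), j.choose k * (d - j).choose (d + 1 - j - k)
        = (∑ i ∈ Finset.range (d + 1 - j), j.choose (i + 1) * (d - j).choose (d + 1 - j - (i + 1)))
          + j.choose 0 * (d - j).choose (d + 1 - j - 0) :=
    Finset.sum_range_succ' _ _
  have h0 : (d - j).choose (d + 1 - j - 0) = 0 := Nat.choose_eq_zero_of_lt (by omega)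
  have hs : ∑ l ∈ Finset.range (d + 1), j.choose (l + 1) * (d - j).choose l
      = ∑ l ∈ Finset.range (d + 1 - j), j.choose (l + 1) * (d - j).choose l := by
    symm
    apply Finset.sum_subset (Finset.range_subset_range.2 (by omega))
    intro x hx1 hx2
    simp only [Finset.mem_range, not_lt] at hx1 hx2
    rw [Nat.choose_eq_zero_of_lt (show d - j < x by omega), mul_zero]
  have key2 : d.choose (d + 1 - j)
      = ∑ k ∈ Finset.range (d + 1 - j + 1), j.choose k * (d - j).choose (d + 1 - j - k) := key
  rw [hs, key2, expand, h0, mul_zero, add_zero]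
  refine Finset.sum_congr rfl fun i hi => ?_
  simp only [Finset.mem_range] at hi
  congr 1
  rw [show d + 1 - j - (i + 1) = (d - j) - i by omega, Nat.choose_symm (by omega)]

private lemma coeff_one_sub_X_pow (d i : ℕ) :
    ((1 - Polynomial.X : Polynomial ℂ) ^ d).coeff i = (-1) ^ i * d.choose i := by
  have h : (1 - Polynomial.X : Polynomial ℂ) = -(Polynomial.X + Polynomial.C (-1)) := by
    rw [map_neg, Polynomial.C_1]; ring
  rw [h, neg_pow, show ((-1 : Polynomial ℂ)) ^ d = Polynomial.C ((-1 : ℂ) ^ d) by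
      rw [map_pow, map_neg, Polynomial.C_1],
    Polynomial.coeff_C_mul, Polynomial.coeff_X_add_C_pow]
  by_cases hi : i ≤ d
  · have h2 : ((-1 : ℂ)) ^ (d - i) * (-1) ^ (d - i) = 1 := by
      rw [← pow_add]; exact Even.neg_one_pow ⟨d - i, rfl⟩
    have hc : ((-1 : ℂ)) ^ d = (-1) ^ (d - i) * (-1) ^ i := by
      rw [← pow_add]; congr 1; omega
    rw [hc, show ((-1 : ℂ) ^ (d - i) * (-1) ^ i) * ((-1 : ℂ) ^ (d - i) * (d.choose i : ℂ))
        = ((-1 : ℂ) ^ (d - i) * (-1) ^ (d - i)) * ((-1 : ℂ) ^ i * d.choose i) by ring,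
      h2, one_mul]
  · rw [Nat.choose_eq_zero_of_lt (by omega)]; simp

private lemma intervalIntegral_conj {f : ℝ → ℂ} {a b : ℝ} :
    (∫ x in a..b, (starRingEnd ℂ) (f x)) = (starRingEnd ℂ) (∫ x in a..b, f x) := by
  simp only [intervalIntegral, integral_conj, map_sub]

private lemma circleIntegral_sum {ι : Type*} (s : Finset ι) (F : ι → ℂ → ℂ)
    (h : ∀ i ∈ s, CircleIntegrable (F i) 0 1) :
    (∮ z in C(0, 1), ∑ i ∈ s, F i z) = ∑ i ∈ s, ∮ z in C(0, 1), F i z := by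
  simp only [circleIntegral]
  rw [← intervalIntegral.integral_finset_sum (fun i hi => (h i hi).out)]
  congr 1; funext θ; rw [Finset.smul_sum]

end Aux


/-- writing `P = ∑_{j=d-k₀}^{k₀} P_j` with `P_j` bihomogeneous of bidegree
`(j, d-j)`, if `g` is continuous on the closed unit disc, holomorphic on the open unit disc,
and `g(ζ) + conj (g(ζ)) = 2 P(h^v(ζ), conj (h^v(ζ)))` on the unit circle, then
`g'(0) = -2 ∑_{j=d-k₀}^{k₀} (∑_{ℓ≥0} C(j, ℓ+1) C(d-j, ℓ)) P_j(v, conj v)`. -/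
theorem stmt16 (n : ℕ) (hn : 1 ≤ n) (m : Fin n → ℕ) (hm : ∀ i, 0 < m i)
    (d k0 : ℕ) (hdk0 : d ≤ 2 * k0) (hk0d : k0 < d)
    (P : MvPolynomial (Fin n ⊕ Fin n) ℂ)
    (Pc : ℕ → MvPolynomial (Fin n ⊕ Fin n) ℂ)
    (hdecomp : P = ∑ j ∈ Finset.Icc (d - k0) k0, Pc j)
    (hPc : ∀ j ∈ Finset.Icc (d - k0) k0, ∀ J ∈ (Pc j).support,
      (∑ i, m i * J (Sum.inl i)) = j ∧ (∑ i, m i * J (Sum.inr i)) = d - j)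
    (v : Fin n → ℂ) (g : ℂ → ℂ)
    (hgc : ContinuousOn g {ζ : ℂ | ‖ζ‖ ≤ 1})
    (hgd : DifferentiableOn ℂ g {ζ : ℂ | ‖ζ‖ < 1})
    (hbd : ∀ ζ : ℂ, ‖ζ‖ = 1 →
      g ζ + conj (g ζ)
        = 2 * eval (Sum.elim (fun l => (1 - ζ) ^ m l * v l)
            (fun l => (1 - conj ζ) ^ m l * conj (v l))) P) :
    deriv g 0 = -2 * ∑ j ∈ Finset.Icc (d - k0) k0,
      ((∑ l ∈ Finset.range (d + 1), j.choose (l + 1) * (d - j).choose l : ℕ) : ℂ) *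
        eval (Sum.elim v (fun l => conj (v l))) (Pc j) := by
  classical
  have hd2 : 2 ≤ d := by omega
  -- conj on the unit circle is the inverse
  have hconj : ∀ z : ℂ, ‖z‖ = 1 → (starRingEnd ℂ) z = z⁻¹ := by
    intro z hz
    have h1 : z * (starRingEnd ℂ) z = 1 := by
      rw [Complex.mul_conj, Complex.normSq_eq_norm_sq, hz]; norm_num
    field_simp [show z ≠ 0 from fun h => by simp [h] at hz] at h1 ⊢
    linear_combination h1
  have hne : ∀ z : ℂ, ‖z‖ = 1 → z ≠ 0 := fun z hz h => by simp [h] at hz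
  set cj : ℕ → ℂ := fun j => eval (Sum.elim v fun l => conj (v l)) (Pc j) with hcj
  set p : Polynomial ℂ := Polynomial.C 2 * ∑ j ∈ Finset.Icc (d - k0) k0,
      Polynomial.C (cj j * (-1) ^ (d - j)) * ((1 - Polynomial.X) ^ d * Polynomial.X ^ j) with hp
  -- Step 1 : boundary identity
  have hA : ∀ ζ : ℂ, ‖ζ‖ = 1 → ζ ^ d * (g ζ + conj (g ζ)) = p.eval ζ := by
    intro ζ hζ
    have hz0 : ζ ≠ 0 := hne ζ hζ
    have hcz : ζ * ((starRingEnd ℂ) ζ) = 1 := by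
      rw [Complex.mul_conj, Complex.normSq_eq_norm_sq, hζ]; norm_num
    rw [hbd ζ hζ, hdecomp, map_sum, hp]
    simp only [Polynomial.eval_mul, Polynomial.eval_C, Polynomial.eval_finset_sum,
      Polynomial.eval_pow, Polynomial.eval_sub, Polynomial.eval_one, Polynomial.eval_X]
    rw [Finset.mul_sum, Finset.mul_sum, Finset.mul_sum]
    refine Finset.sum_congr rfl fun j hj => ?_
    obtain ⟨hj1, hj2⟩ := Finset.mem_Icc.1 hj
    have hjd : j ≤ d := le_trans hj2 hk0d.le
    rw [eval_bihom m d j (Pc j) (hPc j hj) v (1 - ζ) (1 - (starRingEnd ℂ) ζ)]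
    have hkey : ζ ^ (d - j) * (1 - (starRingEnd ℂ) ζ) ^ (d - j)
        = (-1) ^ (d - j) * (1 - ζ) ^ (d - j) := by
      rw [← mul_pow, show ζ * (1 - (starRingEnd ℂ) ζ) = -1 * (1 - ζ) by
        rw [mul_sub, mul_one, hcz]; ring, mul_pow]
    have hdd : ζ ^ d = ζ ^ j * ζ ^ (d - j) := by rw [← pow_add]; congr 1; omega
    have e1 : (1 - ζ) ^ j * (1 - ζ) ^ (d - j) = (1 - ζ) ^ d := by
      rw [← pow_add]; congr 1; omega
    calc ζ ^ d * (2 * ((1 - ζ) ^ j * (1 - (starRingEnd ℂ) ζ) ^ (d - j) * cj j))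
        = 2 * ((1 - ζ) ^ j * cj j) * (ζ ^ j * (ζ ^ (d - j) * (1 - (starRingEnd ℂ) ζ) ^ (d - j))) := by
          rw [hdd]; ring
      _ = 2 * ((1 - ζ) ^ j * cj j) * (ζ ^ j * ((-1) ^ (d - j) * (1 - ζ) ^ (d - j))) := by rw [hkey]
      _ = cj j * (-1) ^ (d - j) * ((1 - ζ) ^ j * (1 - ζ) ^ (d - j) * ζ ^ j) * 2 := by ring
      _ = 2 * (cj j * (-1) ^ (d - j) * ((1 - ζ) ^ d * ζ ^ j)) := by rw [e1]; ring
  -- Step 2 : degree bound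
  have hdeg : p.natDegree ≤ 2 * d := by
    rw [hp]
    refine le_trans Polynomial.natDegree_mul_le ?_
    rw [Polynomial.natDegree_C, zero_add]
    refine Polynomial.natDegree_sum_le_of_forall_le _ _ fun j hj => ?_
    obtain ⟨hj1, hj2⟩ := Finset.mem_Icc.1 hj
    refine le_trans Polynomial.natDegree_mul_le ?_
    rw [Polynomial.natDegree_C, zero_add]
    refine le_trans Polynomial.natDegree_mul_le ?_
    have h1 : ((1 - Polynomial.X : Polynomial ℂ) ^ d).natDegree ≤ d := by
      refine le_trans Polynomial.natDegree_pow_le ?_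
      have : (1 - Polynomial.X : Polynomial ℂ).natDegree ≤ 1 := by
        refine le_trans (Polynomial.natDegree_sub_le _ _) ?_
        simp [Polynomial.natDegree_X, Polynomial.natDegree_one]
      nlinarith
    have h2 : (Polynomial.X ^ j : Polynomial ℂ).natDegree ≤ j :=
      le_of_eq (Polynomial.natDegree_X_pow j)
    omega
  -- Step 3 : the relevant coefficient of `p`
  have hcoeff : p.coeff (d + 1)
      = -2 * ∑ j ∈ Finset.Icc (d - k0) k0, (d.choose (d + 1 - j) : ℂ) * cj j := by
    rw [hp, Polynomial.coeff_C_mul, Polynomial.finset_sum_coeff, Finset.mul_sum, Finset.mul_sum]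
    refine Finset.sum_congr rfl fun j hj => ?_
    obtain ⟨hj1, hj2⟩ := Finset.mem_Icc.1 hj
    have hj1' : 1 ≤ j := by omega
    have hjd : j ≤ d := le_trans hj2 hk0d.le
    rw [Polynomial.coeff_C_mul, Polynomial.coeff_mul_X_pow', if_pos (by omega),
      coeff_one_sub_X_pow]
    have hsign : ((-1 : ℂ)) ^ (d - j) * (-1) ^ (d + 1 - j) = -1 := by
      rw [show d + 1 - j = (d - j) + 1 by omega, pow_succ, ← mul_assoc, ← pow_add,
        Even.neg_one_pow ⟨d - j, rfl⟩, one_mul]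
    calc (2 : ℂ) * (cj j * (-1) ^ (d - j) * ((-1) ^ (d + 1 - j) * (d.choose (d + 1 - j) : ℂ)))
        = ((-1 : ℂ) ^ (d - j) * (-1) ^ (d + 1 - j)) * (2 * (cj j * (d.choose (d + 1 - j) : ℂ))) := by
          ring
      _ = -2 * ((d.choose (d + 1 - j) : ℂ) * cj j) := by rw [hsign]; ring
  -- Step 4 : Cauchy formula for the derivative
  have hball : {ζ : ℂ | ‖ζ‖ < 1} = Metric.ball (0 : ℂ) 1 := by
    ext z; simp [Metric.mem_ball, Complex.dist_eq]
  have hcball : {ζ : ℂ | ‖ζ‖ ≤ 1} = Metric.closedBall (0 : ℂ) 1 := by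
    ext z; simp [Metric.mem_closedBall, Complex.dist_eq]
  have hps : HasFPowerSeriesOnBall g (cauchyPowerSeries g 0 1) 0 1 := by
    have := Complex.hasFPowerSeriesOnBall_of_differentiable_off_countable
      (R := 1) (c := 0) (f := g) (s := ∅) Set.countable_empty
      (by rw [NNReal.coe_one, ← hcball]; exact hgc)
      (fun z hz => by
        refine hgd.differentiableAt ?_
        refine (hball ▸ Metric.isOpen_ball).mem_nhds ?_
        rw [hball]
        simpa [NNReal.coe_one] using hz.1) one_pos
    simpa using this
  have hderiv : deriv g 0
      = (2 * Real.pi * Complex.I : ℂ)⁻¹ • ∮ z in C(0, 1), (1 / (z - 0)) ^ 1 • ((z - 0)⁻¹ • g z) := by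
    have h := hps.hasFPowerSeriesAt.deriv
    rw [h, cauchyPowerSeries_apply]
  -- Step 5 : the circle integral
  have hint : (∮ z in C(0, 1), (1 / (z - 0)) ^ 1 • ((z - 0)⁻¹ • g z))
      = (2 * Real.pi * Complex.I) * p.coeff (d + 1) := by
    have hsph : ∀ z : ℂ, z ∈ Metric.sphere (0 : ℂ) (1 : ℝ) → ‖z‖ = 1 := by
      intro z hz; simpa [Complex.dist_eq] using hz
    have hsub : Metric.sphere (0 : ℂ) (1 : ℝ) ⊆ {ζ : ℂ | ‖ζ‖ ≤ 1} := by
      rw [hcball]; exact Metric.sphere_subset_closedBall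
    -- the circle integral of `g` vanishes
    have hgint : (∮ z in C(0, 1), g z) = 0 :=
      Complex.circleIntegral_eq_zero_of_differentiable_on_off_countable zero_le_one
        Set.countable_empty (hcball ▸ hgc)
        (fun z hz => hgd.differentiableAt
          ((hball ▸ Metric.isOpen_ball).mem_nhds (by rw [hball]; exact hz.1)))
    have hJ : (∫ θ in (0:ℝ)..(2 * Real.pi), circleMap 0 1 θ * g (circleMap 0 1 θ)) = 0 := by
      have h2 := hgint
      simp only [circleIntegral, deriv_circleMap, smul_eq_mul] at h2
      have h3 : ∀ θ : ℝ, circleMap 0 1 θ * Complex.I * g (circleMap 0 1 θ)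
          = Complex.I * (circleMap 0 1 θ * g (circleMap 0 1 θ)) := fun θ => by ring
      simp only [h3] at h2
      rw [intervalIntegral.integral_const_mul] at h2
      rcases mul_eq_zero.1 h2 with h | h
      · exact absurd h Complex.I_ne_zero
      · exact h
    have habs : ∀ θ : ℝ, ‖circleMap 0 1 θ‖ = 1 := fun θ => by
      simpa using norm_circleMap_zero 1 θ
    -- the integral of the conjugate part vanishes
    have hI1 : (∮ z in C(0, 1), z⁻¹ * (z⁻¹ * (starRingEnd ℂ) (g z))) = 0 := by
      simp only [circleIntegral, deriv_circleMap, smul_eq_mul]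
      have h3 : ∀ θ : ℝ, circleMap 0 1 θ * Complex.I *
            ((circleMap 0 1 θ)⁻¹ * ((circleMap 0 1 θ)⁻¹ * (starRingEnd ℂ) (g (circleMap 0 1 θ))))
          = Complex.I * (starRingEnd ℂ) (circleMap 0 1 θ * g (circleMap 0 1 θ)) := by
        intro θ
        have h0 : circleMap 0 1 θ ≠ 0 := hne _ (habs θ)
        have h1 : circleMap 0 1 θ * (starRingEnd ℂ) (circleMap 0 1 θ) = 1 := by
          rw [Complex.mul_conj, Complex.normSq_eq_norm_sq, habs θ]; norm_num
        rw [map_mul, hconj _ (habs θ)]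
        linear_combination Complex.I * (circleMap 0 1 θ)⁻¹ *
          (starRingEnd ℂ) (g (circleMap 0 1 θ)) * (by
            field_simp : circleMap 0 1 θ * (circleMap 0 1 θ)⁻¹ = 1)
      simp only [h3]
      rw [intervalIntegral.integral_const_mul, intervalIntegral_conj, hJ, map_zero, mul_zero]
    -- the two pieces of the boundary data
    set F1 : ℂ → ℂ := fun z => ∑ i ∈ Finset.range (2 * d + 1),
        p.coeff i * z ^ ((i : ℤ) - ((d : ℤ) + 2)) with hF1
    set F2 : ℂ → ℂ := fun z => z⁻¹ * (z⁻¹ * (starRingEnd ℂ) (g z)) with hF2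
    have heq : Set.EqOn (fun z : ℂ => (1 / (z - 0)) ^ 1 • ((z - 0)⁻¹ • g z))
        (fun z => F1 z - F2 z) (Metric.sphere (0 : ℂ) 1) := by
      intro z hz
      have hz1 := hsph z hz
      have h0 : z ≠ 0 := hne z hz1
      have hSz : g z + (starRingEnd ℂ) (g z) = (z ^ d)⁻¹ * Polynomial.eval z p := by
        rw [← hA z hz1]
        field_simp
      have hpe : Polynomial.eval z p = ∑ i ∈ Finset.range (2 * d + 1), p.coeff i * z ^ i :=
        Polynomial.eval_eq_sum_range' (by omega) z
      simp only [smul_eq_mul, sub_zero, one_div, pow_one, hF1, hF2]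
      have key : z⁻¹ * (z⁻¹ * g z)
          = z⁻¹ * (z⁻¹ * ((z ^ d)⁻¹ * Polynomial.eval z p))
            - z⁻¹ * (z⁻¹ * (starRingEnd ℂ) (g z)) := by
        linear_combination z⁻¹ * z⁻¹ * hSz
      rw [key]
      congr 1
      rw [hpe, Finset.mul_sum, Finset.mul_sum, Finset.mul_sum]
      refine Finset.sum_congr rfl fun i hi => ?_
      have hzp : z ^ ((i : ℤ) - ((d : ℤ) + 2)) = z ^ i * (z ^ (d + 2))⁻¹ := by
        rw [zpow_sub₀ h0, zpow_natCast, show ((d : ℤ) + 2) = ((d + 2 : ℕ) : ℤ) by push_cast; ring,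
          zpow_natCast, div_eq_mul_inv]
      rw [hzp, show z ^ (d + 2) = z ^ d * z * z by rw [pow_succ, pow_succ], mul_inv, mul_inv]
      ring
    -- integrability of the pieces
    have hi2 : CircleIntegrable F2 0 1 := by
      apply ContinuousOn.circleIntegrable zero_le_one
      have hid : ContinuousOn (fun z : ℂ => z⁻¹) (Metric.sphere (0 : ℂ) (1 : ℝ)) :=
        continuousOn_id.inv₀ fun z hz => hne z (hsph z hz)
      exact hid.mul (hid.mul (Complex.continuous_conj.comp_continuousOn (hgc.mono hsub)))
    have hterms : ∀ i ∈ Finset.range (2 * d + 1),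
        CircleIntegrable (fun z : ℂ => p.coeff i * z ^ ((i : ℤ) - ((d : ℤ) + 2))) 0 1 := by
      intro i _
      apply ContinuousOn.circleIntegrable zero_le_one
      exact continuousOn_const.mul
        (continuousOn_id.zpow₀ _ fun z hz => Or.inl (hne z (hsph z hz)))
    have hi1 : CircleIntegrable F1 0 1 := by
      apply ContinuousOn.circleIntegrable zero_le_one
      exact continuousOn_finset_sum _ fun i hi => continuousOn_const.mul
        (continuousOn_id.zpow₀ _ fun z hz => Or.inl (hne z (hsph z hz)))
    -- evaluation of each elementary integral
    have hterm : ∀ i : ℕ, (∮ z in C(0, 1), p.coeff i * z ^ ((i : ℤ) - ((d : ℤ) + 2)))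
        = if i = d + 1 then (2 * Real.pi * Complex.I) * p.coeff (d + 1) else 0 := by
      intro i
      have hpull : (∮ z in C(0, 1), p.coeff i * z ^ ((i : ℤ) - ((d : ℤ) + 2)))
          = p.coeff i * ∮ z in C(0, 1), z ^ ((i : ℤ) - ((d : ℤ) + 2)) := by
        simp only [← smul_eq_mul]
        exact circleIntegral.integral_smul (p.coeff i) _ 0 1
      by_cases hi : i = d + 1
      · subst hi
        rw [hpull, if_pos rfl]
        have hexp : ((d + 1 : ℕ) : ℤ) - ((d : ℤ) + 2) = -1 := by push_cast; ring
        simp only [hexp, zpow_neg_one]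
        have h2 := circleIntegral.integral_sub_inv_of_mem_ball
          (show (0 : ℂ) ∈ Metric.ball (0 : ℂ) 1 by simp)
        simp only [sub_zero] at h2
        rw [h2]
        ring
      · rw [hpull, if_neg hi]
        have h2 := circleIntegral.integral_sub_zpow_of_ne
          (show (i : ℤ) - ((d : ℤ) + 2) ≠ -1 by omega) 0 0 1
        simp only [sub_zero] at h2
        rw [h2, mul_zero]
    rw [circleIntegral.integral_congr zero_le_one heq,
      circleIntegral.integral_sub hi1 hi2, hI1, sub_zero, hF1,
      circleIntegral_sum _ _ hterms]
    rw [Finset.sum_congr rfl fun i _ => hterm i, Finset.sum_ite_eq' (Finset.range (2 * d + 1))]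
    rw [if_pos (Finset.mem_range.2 (by omega))]
  rw [hderiv, hint, smul_eq_mul, inv_mul_cancel_left₀ Complex.two_pi_I_ne_zero, hcoeff]
  rw [neg_mul, neg_mul, neg_inj, Finset.mul_sum, Finset.mul_sum]
  refine Finset.sum_congr rfl fun j hj => ?_
  obtain ⟨hj1, hj2⟩ := Finset.mem_Icc.1 hj
  rw [choose_sum d j (by omega) (by omega)]
end
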